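/- arXiv:2310.01793 — 11 statements merged into one kernel-verified Lean document; each statement's English description precedes it below -/
import Mathlib

section
/- Let G be a finite group, S an inverse-closed subset of G∖{e}, and k a positive integer. If Cay(G,S) admits a subgroup (0,k)-regular set, then k divides |S|. -/
open Set

/-- An `(a,b)`-regular set in a graph: a nonempty proper subset `D` of the vertex set such
that every vertex in `D` has exactly `a` neighbours in `D` and every vertex outside `D`
has exactly `b` neighbours in `D`. -/
def IsRegularSet {V : Type*} (G : SimpleGraph V) (D : Set V) (a b : ℕ) : Prop :=
  D.Nonempty ∧ D ≠ Set.univ ∧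
    (∀ v ∈ D, {u | G.Adj v u ∧ u ∈ D}.ncard = a) ∧
    (∀ v ∉ D, {u | G.Adj v u ∧ u ∈ D}.ncard = b)

/-- The Cayley graph of a group with connection set `S`: `x ~ y` iff `y * x⁻¹ ∈ S`
(stated symmetrically; when `S` is inverse-closed and `1 ∉ S` this is the usual notion). -/
def cayley {G : Type*} [Group G] (S : Set G) : SimpleGraph G where
  Adj x y := x ≠ y ∧ y * x⁻¹ ∈ S ∧ x * y⁻¹ ∈ S
  symm := ⟨fun x y h => ⟨h.1.symm, h.2.2, h.2.1⟩⟩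
  loopless := ⟨fun x h => h.1 rfl⟩

theorem stmt2 {G : Type*} [Group G] [Fintype G] (S : Set G)
    (hS1 : (1 : G) ∉ S) (hSinv : ∀ s ∈ S, s⁻¹ ∈ S) (k : ℕ) (hk : 1 ≤ k)
    (h : ∃ H : Subgroup G, IsRegularSet (cayley S) (H : Set G) 0 k) :
    k ∣ S.ncard := by
  classical
  obtain ⟨H, hne, hproper, h0, hkreg⟩ := h
  -- S is disjoint from H
  have hSH : ∀ s ∈ S, s ∉ (H : Set G) := by
    intro s hs hsH
    have h1 := h0 1 (H.one_mem)
    have hfin : {u | (cayley S).Adj 1 u ∧ u ∈ (H : Set G)}.Finite := Set.toFinite _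
    rw [Set.ncard_eq_zero hfin] at h1
    have hmem : s ∈ {u | (cayley S).Adj 1 u ∧ u ∈ (H : Set G)} := by
      refine ⟨⟨?_, by simpa using hs, by simpa using hSinv s hs⟩, hsH⟩
      rintro rfl; exact hS1 hs
    rw [h1] at hmem
    exact hmem
  -- key: each left coset vH with v ∉ H contains exactly k elements of S
  have key : ∀ v : G, v ∉ (H : Set G) →
      {s | s ∈ S ∧ (QuotientGroup.mk s : G ⧸ H) = QuotientGroup.mk v}.ncard = k := by
    intro v hv
    have himg : {s | s ∈ S ∧ (QuotientGroup.mk s : G ⧸ H) = QuotientGroup.mk v}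
        = (fun h => v * h⁻¹) '' {u | (cayley S).Adj v u ∧ u ∈ (H : Set G)} := by
      ext s
      constructor
      · rintro ⟨hs, hq⟩
        have hmemH : s⁻¹ * v ∈ H := (QuotientGroup.eq).mp hq
        refine ⟨s⁻¹ * v, ⟨⟨?_, ?_, ?_⟩, hmemH⟩, by group⟩
        · intro hvs
          have hs1 : s⁻¹ = 1 := mul_right_cancel (b := v) (c := 1) (by simpa using hvs.symm)
          have : s = 1 := by simpa using congrArg Inv.inv hs1
          exact hS1 (this ▸ hs)
        · have : (s⁻¹ * v) * v⁻¹ = s⁻¹ := by group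
          rw [this]; exact hSinv s hs
        · have : v * (s⁻¹ * v)⁻¹ = s := by group
          rw [this]; exact hs
      · rintro ⟨u, ⟨⟨hne', hu1, hu2⟩, huH⟩, rfl⟩
        refine ⟨hu2, ?_⟩
        rw [QuotientGroup.eq]
        have : (v * u⁻¹)⁻¹ * v = u := by group
        rw [this]; exact huH
    rw [himg, Set.ncard_image_of_injective _ (fun a b hab => by
      simpa using inv_injective (mul_left_cancel hab))]
    exact hkreg v hv
  -- count S fiberwise over G ⧸ H
  have : Fintype (G ⧸ H) := Fintype.ofFinite _
  have hcard : S.toFinset.card =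
      ∑ q : G ⧸ H, (S.toFinset.filter (fun s => (QuotientGroup.mk s : G ⧸ H) = q)).card := by
    exact Finset.card_eq_sum_card_fiberwise (fun s _ => Finset.mem_univ _)
  have hdvd : ∀ q : G ⧸ H,
      k ∣ (S.toFinset.filter (fun s => (QuotientGroup.mk s : G ⧸ H) = q)).card := by
    intro q
    obtain ⟨v, rfl⟩ := QuotientGroup.mk_surjective q
    by_cases hv : v ∈ (H : Set G)
    · have : (S.toFinset.filter (fun s => (QuotientGroup.mk s : G ⧸ H) = QuotientGroup.mk v)) = ∅ := by
        refine Finset.filter_eq_empty_iff.mpr ?_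
        intro s hs hq
        have hsS : s ∈ S := Set.mem_toFinset.mp hs
        have : s⁻¹ * v ∈ H := (QuotientGroup.eq).mp hq
        have : s ∈ H := by
          have := H.mul_mem this (H.inv_mem hv)
          simpa using H.inv_mem this
        exact hSH s hsS this
      rw [this]; simp
    · have heq : ((S.toFinset.filter (fun s => (QuotientGroup.mk s : G ⧸ H) = QuotientGroup.mk v)) : Set G)
          = {s | s ∈ S ∧ (QuotientGroup.mk s : G ⧸ H) = QuotientGroup.mk v} := by
        ext s; simp [Set.mem_toFinset]
      have := key v hv
      rw [← heq, Set.ncard_coe_finset] at this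
      rw [this]
  rw [Set.ncard_eq_toFinset_card', hcard]
  exact Finset.dvd_sum (fun q _ => hdvd q)
end

section
/- Let G be a finite group, H a proper subgroup of G, S an inverse-closed subset of G∖{e}, and k a positive integer. If H is a (0,k)-regular set in Cay(G,S), then there exists a subset L of S with |L| = |G:H| − 1 such that L ∪ {e} is a left transversal of H in G. -/
open Set

/-- A left transversal of `H` in `G`: a set containing exactly one element of each left
coset of `H`. -/
def IsLeftTransversal {G : Type*} [Group G] (H : Subgroup G) (T : Set G) : Prop :=
  ∀ g : G, ∃! t, t ∈ T ∧ t⁻¹ * g ∈ H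

theorem stmt3 {G : Type*} [Group G] [Fintype G] (H : Subgroup G) (hH : H ≠ ⊤)
    (S : Set G) (hS1 : (1 : G) ∉ S) (hSinv : ∀ s ∈ S, s⁻¹ ∈ S) (k : ℕ) (hk : 1 ≤ k)
    (h : IsRegularSet (cayley S) (H : Set G) 0 k) :
    ∃ L ⊆ S, L.ncard = H.index - 1 ∧ IsLeftTransversal H (L ∪ {1}) := by
  classical
  obtain ⟨hne, hproper, h0, hkreg⟩ := h
  have heq1 : ∀ v : G, (QuotientGroup.mk v : G ⧸ H) = QuotientGroup.mk 1 ↔ v ∈ H := by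
    intro v
    rw [QuotientGroup.eq]
    simp
  -- S is disjoint from H
  have hSH : ∀ s ∈ S, s ∉ H := by
    intro s hs hsH
    have h1 : {u | (cayley S).Adj 1 u ∧ u ∈ (H : Set G)}.ncard = 0 := h0 1 H.one_mem
    have hmem : s ∈ {u | (cayley S).Adj 1 u ∧ u ∈ (H : Set G)} := by
      refine ⟨⟨?_, by simpa using hs, by simpa using hSinv s hs⟩, hsH⟩
      rintro rfl; exact hS1 hs
    rw [Set.ncard_eq_zero (Set.toFinite _)] at h1
    rw [h1] at hmem
    exact Set.notMem_empty s hmem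
  -- every nontrivial coset contains an element of S
  have hrep : ∀ q : G ⧸ H, q ≠ QuotientGroup.mk 1 →
      ∃ s, s ∈ S ∧ (QuotientGroup.mk s : G ⧸ H) = q := by
    intro q hq
    obtain ⟨v, rfl⟩ := QuotientGroup.mk_surjective q
    have hv : v ∉ H := fun hvH => hq ((heq1 v).mpr hvH)
    have hkc := hkreg v hv
    have hnon : {u | (cayley S).Adj v u ∧ u ∈ (H : Set G)}.Nonempty := by
      rw [Set.nonempty_iff_ne_empty]
      intro he
      rw [Set.ncard_eq_zero (Set.toFinite _) |>.mpr he] at hkc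
      omega
    obtain ⟨u, hadj, huH⟩ := hnon
    refine ⟨v * u⁻¹, hadj.2.2, ?_⟩
    rw [QuotientGroup.eq]
    have huv : (v * u⁻¹)⁻¹ * v = u := by group
    rw [huv]; exact huH
  -- choice of representative
  set g : G ⧸ H → G := fun q =>
    if hq : q = QuotientGroup.mk 1 then 1 else (hrep q hq).choose with hg
  have hgS : ∀ q : G ⧸ H, q ≠ QuotientGroup.mk 1 → g q ∈ S := by
    intro q hq; simp only [hg, dif_neg hq]; exact (hrep q hq).choose_spec.1
  have hgmk : ∀ q : G ⧸ H, q ≠ QuotientGroup.mk 1 →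
      (QuotientGroup.mk (g q) : G ⧸ H) = q := by
    intro q hq; simp only [hg, dif_neg hq]; exact (hrep q hq).choose_spec.2
  refine ⟨g '' {q | q ≠ QuotientGroup.mk 1}, ?_, ?_, ?_⟩
  · rintro x ⟨q, hq, rfl⟩; exact hgS q hq
  · have hinj : Set.InjOn g {q | q ≠ QuotientGroup.mk 1} := by
      intro a ha b hb hab
      rw [← hgmk a ha, ← hgmk b hb, hab]
    rw [Set.ncard_image_of_injOn hinj]
    have hcompl : ({q : G ⧸ H | q ≠ QuotientGroup.mk 1})
        = ({QuotientGroup.mk 1} : Set (G ⧸ H))ᶜ := by ext q; simp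
    rw [hcompl]
    have hc := Set.ncard_add_ncard_compl ({QuotientGroup.mk 1} : Set (G ⧸ H))
    rw [Set.ncard_singleton] at hc
    rw [Subgroup.index_eq_card]
    omega
  · intro x
    by_cases hx : (QuotientGroup.mk x : G ⧸ H) = QuotientGroup.mk 1
    · refine ⟨1, ⟨Or.inr rfl, by simpa using (heq1 x).mp hx⟩, ?_⟩
      rintro t ⟨ht, htH⟩
      rcases ht with ⟨q, hq, rfl⟩ | ht
      · exfalso
        have hqq : (QuotientGroup.mk (g q) : G ⧸ H) = QuotientGroup.mk x :=
          QuotientGroup.eq.mpr htH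
        rw [hgmk q hq, hx] at hqq
        exact hq hqq
      · exact ht
    · refine ⟨g (QuotientGroup.mk x), ⟨Or.inl ⟨_, hx, rfl⟩, ?_⟩, ?_⟩
      · exact QuotientGroup.eq.mp (hgmk _ hx)
      · rintro t ⟨ht, htH⟩
        rcases ht with ⟨q, hq, rfl⟩ | ht
        · have hqq : (QuotientGroup.mk (g q) : G ⧸ H) = QuotientGroup.mk x :=
            QuotientGroup.eq.mpr htH
          rw [hgmk q hq] at hqq
          rw [hqq]
        · exfalso
          rw [ht] at htH
          exact hx ((heq1 x).mpr (by simpa using htH))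
end

section
/- Let G be a finite group, H a proper subgroup, S ⊆ G∖{e} inverse-closed, and k ≥ 1. If H is a (0,k)-regular set in Cay(G,S), then for any k+1 distinct elements s₁,…,s_{k+1} of S, one has s₁H ∩ s₂H ∩ ⋯ ∩ s_{k+1}H = ∅. -/
open Set Pointwise

theorem stmt4 {G : Type*} [Group G] [Fintype G] (H : Subgroup G) (hH : H ≠ ⊤)
    (S : Set G) (hS1 : (1 : G) ∉ S) (hSinv : ∀ s ∈ S, s⁻¹ ∈ S) (k : ℕ) (hk : 1 ≤ k)
    (h : IsRegularSet (cayley S) (H : Set G) 0 k)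
    (s : Fin (k + 1) → G) (hinj : Function.Injective s) (hs : ∀ i, s i ∈ S) :
    (⋂ i, s i • (H : Set G)) = ∅ := by

  classical
  rw [Set.eq_empty_iff_forall_notMem]
  intro x hx
  simp only [Set.mem_iInter, Set.mem_smul_set_iff_inv_smul_mem] at hx
  -- each (s i)⁻¹ * x is a neighbour of x lying in H
  have hadj : ∀ i, (cayley S).Adj x ((s i)⁻¹ * x) := by
    intro i
    refine ⟨?_, ?_, ?_⟩
    · intro he
      apply hS1
      have h1 : (1 : G) * x = (s i)⁻¹ * x := by simpa using he
      have h2 : (1 : G) = (s i)⁻¹ := mul_right_cancel h1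
      have h3 : s i = 1 := by rw [← inv_inv (s i), ← h2, inv_one]
      rw [← h3]; exact hs i
    · have : (s i)⁻¹ * x * x⁻¹ = (s i)⁻¹ := by group
      rw [this]; exact hSinv _ (hs i)
    · have : x * ((s i)⁻¹ * x)⁻¹ = s i := by group
      rw [this]; exact hs i
  by_cases hxH : x ∈ (H : Set G)
  · have h0 := h.2.2.1 x hxH
    have hfin : {u | (cayley S).Adj x u ∧ u ∈ (H : Set G)}.Finite := Set.toFinite _
    have := (Set.ncard_eq_zero hfin).mp h0
    have hmem : (s 0)⁻¹ * x ∈ {u | (cayley S).Adj x u ∧ u ∈ (H : Set G)} :=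
      ⟨hadj 0, hx 0⟩
    rw [this] at hmem
    exact hmem
  · have hk' := h.2.2.2 x hxH
    set N := {u | (cayley S).Adj x u ∧ u ∈ (H : Set G)} with hN
    have hfin : N.Finite := Set.toFinite _
    have hsub : Set.range (fun i => (s i)⁻¹ * x) ⊆ N := by
      rintro _ ⟨i, rfl⟩
      exact ⟨hadj i, hx i⟩
    have hinj2 : Function.Injective (fun i : Fin (k+1) => (s i)⁻¹ * x) := by
      intro i j hij
      exact hinj (inv_injective (mul_right_cancel hij))
    have hcard : (Set.range (fun i : Fin (k+1) => (s i)⁻¹ * x)).ncard = k + 1 := by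
      rw [Set.ncard_eq_toFinset_card', Set.toFinset_range]
      rw [Finset.card_image_of_injective _ hinj2]
      simp
    have hle : k + 1 ≤ N.ncard := by
      rw [← hcard]
      exact Set.ncard_le_ncard hsub hfin
    omega
end

section
/- Let G be a finite group, H a proper subgroup, S ⊆ G∖{e} inverse-closed, and k ≥ 1. Then H is a (0,k)-regular set in Cay(G,S) if and only if S can be partitioned into k parts L₁,…,L_k such that each Lᵢ ∪ {e} is a left transversal of H in G. -/
open Set

section Aux

variable {G : Type*} [Group G] (H : Subgroup G) (S : Set G)

/-- The part of `S` lying in the left coset corresponding to `q`. -/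
def Sset (q : G ⧸ H) : Set G := {g | g ∈ S ∧ (QuotientGroup.mk g : G ⧸ H) = q}

lemma mk_eq_one_iff (g : G) : (QuotientGroup.mk g : G ⧸ H) = QuotientGroup.mk 1 ↔ g ∈ H := by
  rw [QuotientGroup.eq]; simp

lemma adj_bijOn (hS1 : (1 : G) ∉ S) (hSinv : ∀ s ∈ S, s⁻¹ ∈ S) (v : G) :
    Set.BijOn (fun u => v * u⁻¹) {u | (cayley S).Adj v u ∧ u ∈ (H : Set G)}
      (Sset H S (QuotientGroup.mk v)) := by
  refine ⟨?_, ?_, ?_⟩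
  · rintro u ⟨⟨hne, h1, h2⟩, hu⟩
    refine ⟨h2, ?_⟩
    rw [QuotientGroup.eq]
    simpa [mul_assoc] using hu
  · rintro u ⟨-, -⟩ w ⟨-, -⟩ h
    simpa using mul_left_cancel h
  · rintro s ⟨hs, hmk⟩
    have hsv : s⁻¹ * v ∈ H := by rw [QuotientGroup.eq] at hmk; exact hmk
    refine ⟨s⁻¹ * v, ⟨⟨?_, ?_, ?_⟩, hsv⟩, ?_⟩
    · intro h
      have h1 : s⁻¹ = 1 := right_eq_mul.mp h
      have h2 : s = 1 := by rw [← inv_inv s, h1, inv_one]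
      exact hS1 (h2 ▸ hs)
    · have : s⁻¹ * v * v⁻¹ = s⁻¹ := mul_inv_cancel_right _ _
      rw [this]; exact hSinv s hs
    · have : v * (s⁻¹ * v)⁻¹ = s := by group
      rw [this]; exact hs
    · show v * (s⁻¹ * v)⁻¹ = s
      group

lemma ncard_adj (hS1 : (1 : G) ∉ S) (hSinv : ∀ s ∈ S, s⁻¹ ∈ S) (v : G) :
    {u | (cayley S).Adj v u ∧ u ∈ (H : Set G)}.ncard = (Sset H S (QuotientGroup.mk v)).ncard := by
  have h := adj_bijOn H S hS1 hSinv v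
  rw [← h.image_eq]
  exact (Set.ncard_image_of_injOn h.injOn).symm

/-- An enumeration of each nontrivial coset part of `S`. -/
noncomputable def trEquiv [Finite G] {k : ℕ}
    (hcard : ∀ q : G ⧸ H, q ≠ QuotientGroup.mk 1 → (Sset H S q).ncard = k)
    (q : G ⧸ H) (hq : q ≠ QuotientGroup.mk 1) : ↥(Sset H S q) ≃ Fin k :=
  Finite.equivFinOfCardEq (by rw [Nat.card_coe_set_eq]; exact hcard q hq)

open Classical in
noncomputable def idx [Finite G] {k : ℕ} (hk : 1 ≤ k)
    (hne : ∀ s ∈ S, (QuotientGroup.mk s : G ⧸ H) ≠ QuotientGroup.mk 1)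
    (hcard : ∀ q : G ⧸ H, q ≠ QuotientGroup.mk 1 → (Sset H S q).ncard = k) (g : G) : Fin k :=
  if hg : g ∈ S then trEquiv H S hcard _ (hne g hg) ⟨g, hg, rfl⟩ else ⟨0, hk⟩

lemma idx_spec [Finite G] {k : ℕ} (hk : 1 ≤ k)
    (hne : ∀ s ∈ S, (QuotientGroup.mk s : G ⧸ H) ≠ QuotientGroup.mk 1)
    (hcard : ∀ q : G ⧸ H, q ≠ QuotientGroup.mk 1 → (Sset H S q).ncard = k)
    (q : G ⧸ H) (hq : q ≠ QuotientGroup.mk 1) (s : G) (hs : s ∈ S)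
    (hmk : (QuotientGroup.mk s : G ⧸ H) = q) :
    idx H S hk hne hcard s = trEquiv H S hcard q hq ⟨s, hs, hmk⟩ := by
  subst hmk
  classical
  simp only [idx, dif_pos hs]

end Aux

theorem stmt5 {G : Type*} [Group G] [Fintype G] (H : Subgroup G) (hH : H ≠ ⊤)
    (S : Set G) (hS1 : (1 : G) ∉ S) (hSinv : ∀ s ∈ S, s⁻¹ ∈ S) (k : ℕ) (hk : 1 ≤ k) :
    IsRegularSet (cayley S) (H : Set G) 0 k ↔
      ∃ L : Fin k → Set G, (Pairwise fun i j => Disjoint (L i) (L j)) ∧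
        (⋃ i, L i) = S ∧ ∀ i, IsLeftTransversal H (L i ∪ {1}) := by
  constructor
  · rintro ⟨-, -, h0, hkk⟩
    -- S ∩ H = ∅
    have hne : ∀ s ∈ S, (QuotientGroup.mk s : G ⧸ H) ≠ QuotientGroup.mk 1 := by
      intro s hs hmk
      have hsH : s ∈ H := (mk_eq_one_iff H s).mp hmk
      have := h0 1 H.one_mem
      rw [ncard_adj H S hS1 hSinv 1] at this
      have hempty : Sset H S (QuotientGroup.mk 1) = ∅ :=
        (Set.ncard_eq_zero (Set.toFinite _)).mp this
      exact absurd hempty (Set.nonempty_iff_ne_empty.mp ⟨s, hs, hmk⟩)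
    have hcard : ∀ q : G ⧸ H, q ≠ QuotientGroup.mk 1 → (Sset H S q).ncard = k := by
      intro q hq
      induction q using QuotientGroup.induction_on with
      | H v =>
        have hv : v ∉ H := by
          intro hvH
          exact hq ((mk_eq_one_iff H v).mpr hvH)
        have := hkk v hv
        rwa [ncard_adj H S hS1 hSinv v] at this
    refine ⟨fun i => {s | s ∈ S ∧ idx H S hk hne hcard s = i}, ?_, ?_, ?_⟩
    · intro i j hij
      rw [Set.disjoint_left]
      rintro s ⟨-, hi⟩ ⟨-, hj⟩
      exact hij (hi ▸ hj ▸ rfl)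
    · ext s
      simp only [Set.mem_iUnion, Set.mem_setOf_eq]
      exact ⟨fun ⟨i, hs, _⟩ => hs, fun hs => ⟨_, hs, rfl⟩⟩
    · intro i g
      by_cases hg : g ∈ H
      · refine ⟨1, ⟨Or.inr rfl, by simpa using hg⟩, ?_⟩
        rintro t ⟨ht, htg⟩
        rcases ht with ⟨hts, -⟩ | ht1
        · exfalso
          apply hne t hts
          rw [mk_eq_one_iff]
          have : t⁻¹ * g * g⁻¹ ∈ H := H.mul_mem htg (H.inv_mem hg)
          simpa using this
        · exact ht1
      · have hq : (QuotientGroup.mk g : G ⧸ H) ≠ QuotientGroup.mk 1 :=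
          fun h => hg ((mk_eq_one_iff H g).mp h)
        set q : G ⧸ H := QuotientGroup.mk g with hqdef
        set t₀ := (trEquiv H S hcard q hq).symm i with ht₀
        refine ⟨(t₀ : G), ⟨Or.inl ⟨t₀.2.1, ?_⟩, ?_⟩, ?_⟩
        · rw [idx_spec H S hk hne hcard q hq _ t₀.2.1 t₀.2.2]
          exact (trEquiv H S hcard q hq).apply_symm_apply i
        · rw [← QuotientGroup.eq]
          exact t₀.2.2
        · rintro t ⟨ht, htg⟩
          rcases ht with ⟨hts, hidx⟩ | ht1
          · have hmk : (QuotientGroup.mk t : G ⧸ H) = q := QuotientGroup.eq.mpr htg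
            rw [idx_spec H S hk hne hcard q hq t hts hmk] at hidx
            have : (⟨t, hts, hmk⟩ : ↥(Sset H S q)) = t₀ := by
              rw [ht₀, Equiv.eq_symm_apply, hidx]
            exact congrArg Subtype.val this
          · have ht1' : t = 1 := ht1
            exact absurd (by simpa [ht1'] using htg) hg
  · rintro ⟨L, hdisj, hunion, htr⟩
    -- every element of an L i is outside H
    have hLH : ∀ i, ∀ t ∈ L i, t ∉ H := by
      intro i t ht htH
      have h1 := (htr i t).unique ⟨Or.inl ht, by simpa using H.one_mem⟩
        ⟨Or.inr rfl, by simpa using htH⟩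
      apply hS1
      rw [← h1]
      exact hunion ▸ Set.mem_iUnion.mpr ⟨i, ht⟩
    have hSnotH : ∀ s ∈ S, s ∉ (H : Set G) := by
      intro s hs
      rw [← hunion] at hs
      obtain ⟨i, hi⟩ := Set.mem_iUnion.mp hs
      exact hLH i s hi
    have hcard : ∀ q : G ⧸ H, q ≠ QuotientGroup.mk 1 → (Sset H S q).ncard = k := by
      intro q hq
      induction q using QuotientGroup.induction_on with
      | H g =>
        have hg : g ∉ H := fun h => hq ((mk_eq_one_iff H g).mpr h)
        have hTex : ∀ i : Fin k, ∃ t, (t ∈ L i ∪ {1} ∧ t⁻¹ * g ∈ H) ∧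
            ∀ y, (y ∈ L i ∪ {1} ∧ y⁻¹ * g ∈ H) → y = t := fun i => htr i g
        choose t ht hu using hTex
        have htL : ∀ i, t i ∈ L i := by
          intro i
          rcases (ht i).1 with h | h
          · exact h
          · have h' : t i = 1 := h
            exact absurd (by simpa [h'] using (ht i).2) hg
        have htS : ∀ i, t i ∈ S := fun i => hunion ▸ Set.mem_iUnion.mpr ⟨i, htL i⟩
        have htmk : ∀ i, (QuotientGroup.mk (t i) : G ⧸ H) = QuotientGroup.mk g :=
          fun i => QuotientGroup.eq.mpr (ht i).2
        have hbij : Function.Bijective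
            (fun i : Fin k => (⟨t i, htS i, htmk i⟩ : ↥(Sset H S (QuotientGroup.mk g)))) := by
          constructor
          · intro i j hij
            by_contra hne'
            have : t i = t j := congrArg Subtype.val hij
            exact Set.disjoint_left.mp (hdisj hne') (htL i) (this ▸ htL j)
          · rintro ⟨s, hs, hmk⟩
            obtain ⟨i, hi⟩ := Set.mem_iUnion.mp (hunion ▸ hs : s ∈ ⋃ i, L i)
            refine ⟨i, ?_⟩
            have : s = t i := hu i s ⟨Or.inl hi, QuotientGroup.eq.mp hmk⟩
            exact Subtype.ext this.symm
        rw [← Nat.card_coe_set_eq, ← Nat.card_congr (Equiv.ofBijective _ hbij),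
          Nat.card_eq_fintype_card, Fintype.card_fin]
    refine ⟨⟨1, H.one_mem⟩, fun h => hH (Subgroup.coe_eq_univ.mp h), ?_, ?_⟩
    · intro v hv
      rw [ncard_adj H S hS1 hSinv v]
      have : Sset H S (QuotientGroup.mk v) = ∅ := by
        rw [Set.eq_empty_iff_forall_notMem]
        rintro s ⟨hs, hmk⟩
        refine hSnotH s hs (show s ∈ H from ?_)
        rw [← mk_eq_one_iff H s, hmk, mk_eq_one_iff]
        exact hv
      rw [this, Set.ncard_empty]
    · intro v hv
      rw [ncard_adj H S hS1 hSinv v]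
      exact hcard _ (fun h => hv ((mk_eq_one_iff H v).mp h))
end

section
/- Let G be a finite group, H a proper subgroup, S ⊆ G∖{e} inverse-closed, and k ≥ 1. If S can be partitioned into k parts L₁,…,L_k with each Lᵢ ∪ {e} a left transversal of H in G, then S can also be partitioned into k parts R₁,…,R_k with each Rᵢ ∪ {e} a right transversal of H in G. -/
open Set

def IsRightTransversal {G : Type*} [Group G] (H : Subgroup G) (T : Set G) : Prop :=
  ∀ g : G, ∃! t, t ∈ T ∧ g * t⁻¹ ∈ H

theorem stmt6 {G : Type*} [Group G] [Fintype G] (H : Subgroup G) (hH : H ≠ ⊤)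
    (S : Set G) (hS1 : (1 : G) ∉ S) (hSinv : ∀ s ∈ S, s⁻¹ ∈ S) (k : ℕ) (hk : 1 ≤ k)
    (L : Fin k → Set G) (hdisj : Pairwise fun i j => Disjoint (L i) (L j))
    (hcover : (⋃ i, L i) = S) (htrans : ∀ i, IsLeftTransversal H (L i ∪ {1})) :
    ∃ R : Fin k → Set G, (Pairwise fun i j => Disjoint (R i) (R j)) ∧
      (⋃ i, R i) = S ∧ ∀ i, IsRightTransversal H (R i ∪ {1}) := by
  refine ⟨fun i => (L i)⁻¹, fun i j hij => ?_, ?_, fun i => ?_⟩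
  · have := hdisj hij
    simp only at this ⊢
    rw [Set.disjoint_left] at this ⊢
    intro a ha ha'
    exact this (Set.mem_inv.mp ha) (Set.mem_inv.mp ha')
  · ext x
    simp only [Set.mem_iUnion, Set.mem_inv]
    constructor
    · rintro ⟨i, hi⟩
      have : x⁻¹ ∈ S := hcover ▸ Set.mem_iUnion.mpr ⟨i, hi⟩
      simpa using hSinv _ this
    · intro hx
      have : x⁻¹ ∈ ⋃ i, L i := hcover ▸ hSinv _ hx
      exact Set.mem_iUnion.mp this
  · intro g
    obtain ⟨t, ⟨ht, htH⟩, huniq⟩ := htrans i g⁻¹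
    refine ⟨t⁻¹, ⟨?_, ?_⟩, ?_⟩
    · rcases ht with h | h
      · exact Or.inl (Set.mem_inv.mpr (by simpa using h))
      · simp_all
    · have : (t⁻¹ * g⁻¹)⁻¹ ∈ H := H.inv_mem htH
      simpa [mul_comm] using this
    · rintro y ⟨hy, hyH⟩
      have hy' : y⁻¹ ∈ L i ∪ {1} := by
        rcases hy with h | h
        · exact Or.inl (Set.mem_inv.mp h)
        · simp_all
      have : (g * y⁻¹)⁻¹ ∈ H := H.inv_mem hyH
      have := huniq y⁻¹ ⟨hy', by simpa using this⟩
      rw [← this]; simp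
end

section
/- Let G be a finite group, H a proper subgroup, S ⊆ G∖{e} inverse-closed, and k ≥ 1. Then H is a (0,k)-regular set in Cay(G,S) if and only if H ∩ S = ∅ and S can be partitioned into |G:H| − 1 parts each of size k such that sH = s′H for s, s′ in the same part and sH ≠ s′H for s, s′ in different parts. -/
open Set Pointwise

section Aux

open Set Pointwise

variable {G : Type*} [Group G]

lemma stmt7_coset_eq (H : Subgroup G) (v : G) :
    v • (H : Set G) = QuotientGroup.mk ⁻¹' {((v : G ⧸ H))} := by
  ext g
  simp [Set.mem_smul_set_iff_inv_smul_mem, eq_comm (a := (QuotientGroup.mk g : G ⧸ H)),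
    QuotientGroup.eq, smul_eq_mul]

lemma stmt7_smul_eq_iff (H : Subgroup G) (s s' : G) :
    s • (H : Set G) = s' • (H : Set G) ↔ (QuotientGroup.mk s : G ⧸ H) = QuotientGroup.mk s' := by
  rw [stmt7_coset_eq, stmt7_coset_eq]
  constructor
  · intro h
    have : s ∈ (QuotientGroup.mk ⁻¹' {((s : G ⧸ H))} : Set G) := by simp
    rw [h] at this
    simpa using this
  · intro h; rw [h]

lemma stmt7_adj_iff {S : Set G} (hS1 : (1 : G) ∉ S) (hSinv : ∀ s ∈ S, s⁻¹ ∈ S) (v u : G) :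
    (cayley S).Adj v u ↔ v * u⁻¹ ∈ S := by
  constructor
  · exact fun h => h.2.2
  · intro h
    refine ⟨fun he => ?_, by simpa using hSinv _ h, h⟩
    subst he; simp at h; exact hS1 h

lemma stmt7_count {S : Set G} (hS1 : (1 : G) ∉ S) (hSinv : ∀ s ∈ S, s⁻¹ ∈ S)
    (H : Subgroup G) (v : G) :
    {u | (cayley S).Adj v u ∧ u ∈ (H : Set G)}.ncard = (S ∩ v • (H : Set G)).ncard := by
  have himg : S ∩ v • (H : Set G) = (fun u => v * u⁻¹) '' {u | (cayley S).Adj v u ∧ u ∈ (H : Set G)} := by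
    ext s
    constructor
    · rintro ⟨hs, hcos⟩
      rw [Set.mem_smul_set_iff_inv_smul_mem, smul_eq_mul] at hcos
      refine ⟨s⁻¹ * v, ⟨(stmt7_adj_iff hS1 hSinv _ _).mpr ?_, ?_⟩, by group⟩
      · have : v * (s⁻¹ * v)⁻¹ = s := by group
        rw [this]; exact hs
      · simpa using H.inv_mem hcos
    · rintro ⟨u, ⟨hadj, hu⟩, rfl⟩
      refine ⟨hadj.2.2, ?_⟩
      rw [Set.mem_smul_set_iff_inv_smul_mem, smul_eq_mul]
      have : v⁻¹ * (v * u⁻¹) = u⁻¹ := by group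
      rw [this]; exact H.inv_mem hu
  rw [himg, Set.ncard_image_of_injective _ (fun a b hab => by
    simpa using inv_injective (mul_left_cancel hab))]

end Aux

theorem stmt7 {G : Type*} [Group G] [Fintype G] (H : Subgroup G) (hH : H ≠ ⊤)
    (S : Set G) (hS1 : (1 : G) ∉ S) (hSinv : ∀ s ∈ S, s⁻¹ ∈ S) (k : ℕ) (hk : 1 ≤ k) :
    IsRegularSet (cayley S) (H : Set G) 0 k ↔
      ((H : Set G) ∩ S = ∅ ∧
        ∃ T : Fin (H.index - 1) → Set G,
          (Pairwise fun i j => Disjoint (T i) (T j)) ∧ (⋃ i, T i) = S ∧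
          (∀ i, (T i).ncard = k) ∧
          (∀ i, ∀ s ∈ T i, ∀ s' ∈ T i, s • (H : Set G) = s' • (H : Set G)) ∧
          (∀ i j, i ≠ j → ∀ s ∈ T i, ∀ s' ∈ T j, s • (H : Set G) ≠ s' • (H : Set G))) := by
  classical
  have hmk1 : ∀ v : G, (QuotientGroup.mk v : G ⧸ H) = QuotientGroup.mk 1 ↔ v ∈ H := by
    intro v; rw [QuotientGroup.eq]; simp
  have hcard : Fintype.card {x : G ⧸ H // x ≠ QuotientGroup.mk 1} = H.index - 1 := by
    rw [Fintype.card_subtype_compl, Fintype.card_subtype_eq]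
    simp [Subgroup.index_eq_card, Nat.card_eq_fintype_card]
  constructor
  · rintro ⟨-, -, h0, hkk⟩
    have hHS : (H : Set G) ∩ S = ∅ := by
      have h1 := h0 1 H.one_mem
      rw [stmt7_count hS1 hSinv, one_smul, Set.ncard_eq_zero, Set.inter_comm] at h1
      exact h1
    have hnotH : ∀ s ∈ S, s ∉ H := fun s hs hsH =>
      (Set.eq_empty_iff_forall_notMem.mp hHS s) ⟨hsH, hs⟩
    refine ⟨hHS, ?_⟩
    set e : Fin (H.index - 1) ≃ {x : G ⧸ H // x ≠ QuotientGroup.mk 1} :=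
      (Fintype.equivFinOfCardEq hcard).symm with he
    refine ⟨fun i => S ∩ QuotientGroup.mk ⁻¹' {((e i : G ⧸ H))}, ?_, ?_, ?_, ?_, ?_⟩
    · intro i j hij
      rw [Set.disjoint_left]
      rintro s ⟨-, hsi⟩ ⟨-, hsj⟩
      simp only [Set.mem_preimage, Set.mem_singleton_iff] at hsi hsj
      exact hij (e.injective (Subtype.coe_injective (hsi.symm.trans hsj)))
    · ext s
      simp only [Set.mem_iUnion]
      constructor
      · rintro ⟨i, hs, -⟩; exact hs
      · intro hs
        have hne : (QuotientGroup.mk s : G ⧸ H) ≠ QuotientGroup.mk 1 :=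
          fun h => hnotH s hs ((hmk1 s).mp h)
        exact ⟨e.symm ⟨_, hne⟩, hs, by simp⟩
    · intro i
      obtain ⟨v, hmkv⟩ : ∃ v : G, (QuotientGroup.mk v : G ⧸ H) = (e i : G ⧸ H) :=
        ⟨Quotient.out (e i : G ⧸ H), Quotient.out_eq _⟩
      have hvH : v ∉ H := by
        intro h
        exact (e i).2 (hmkv ▸ (hmk1 v).mpr h)
      have hcount := hkk v hvH
      rw [stmt7_count hS1 hSinv, stmt7_coset_eq, hmkv] at hcount
      exact hcount
    · rintro i s ⟨-, hs⟩ s' ⟨-, hs'⟩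
      simp only [Set.mem_preimage, Set.mem_singleton_iff] at hs hs'
      rw [stmt7_smul_eq_iff, hs, hs']
    · rintro i j hij s ⟨-, hs⟩ s' ⟨-, hs'⟩ heq
      simp only [Set.mem_preimage, Set.mem_singleton_iff] at hs hs'
      rw [stmt7_smul_eq_iff, hs, hs'] at heq
      exact hij (e.injective (Subtype.coe_injective heq))
  · rintro ⟨hHS, T, hdisj, hunion, hcardT, hsame, hdiff⟩
    have hnotH : ∀ s ∈ S, s ∉ H := fun s hs hsH =>
      (Set.eq_empty_iff_forall_notMem.mp hHS s) ⟨hsH, hs⟩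
    have hTS : ∀ i, T i ⊆ S := by
      intro i; rw [← hunion]; exact Set.subset_iUnion T i
    have hTne : ∀ i, (T i).Nonempty := fun i =>
      Set.nonempty_of_ncard_ne_zero (by rw [hcardT]; omega)
    choose w hw using hTne
    have hwS : ∀ i, w i ∈ S := fun i => hTS i (hw i)
    set c : Fin (H.index - 1) → {x : G ⧸ H // x ≠ QuotientGroup.mk 1} :=
      fun i => ⟨QuotientGroup.mk (w i), fun h => hnotH _ (hwS i) ((hmk1 _).mp h)⟩ with hc
    have hcinj : Function.Injective c := by
      intro i j hij
      by_contra hne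
      exact hdiff i j hne (w i) (hw i) (w j) (hw j)
        ((stmt7_smul_eq_iff H _ _).mpr (congrArg Subtype.val hij))
    have hcsurj : Function.Surjective c :=
      ((Fintype.bijective_iff_injective_and_card c).mpr ⟨hcinj, by simp [hcard]⟩).2
    refine ⟨⟨1, H.one_mem⟩, fun h => hH (Subgroup.coe_eq_univ.mp h), ?_, ?_⟩
    · intro v hv
      rw [stmt7_count hS1 hSinv, stmt7_coset_eq, (hmk1 v).mpr hv, ← stmt7_coset_eq, one_smul,
        Set.ncard_eq_zero, Set.inter_comm]
      exact hHS
    · intro v hv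
      rw [stmt7_count hS1 hSinv, stmt7_coset_eq]
      have hvne : (QuotientGroup.mk v : G ⧸ H) ≠ QuotientGroup.mk 1 := fun h => hv ((hmk1 v).mp h)
      obtain ⟨i, hi⟩ := hcsurj ⟨QuotientGroup.mk v, hvne⟩
      have hiv : (QuotientGroup.mk (w i) : G ⧸ H) = QuotientGroup.mk v := congrArg Subtype.val hi
      have hTi : S ∩ QuotientGroup.mk ⁻¹' {((QuotientGroup.mk v : G ⧸ H))} = T i := by
        ext s
        constructor
        · rintro ⟨hsS, hsv⟩
          simp only [Set.mem_preimage, Set.mem_singleton_iff] at hsv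
          have hsU : s ∈ ⋃ j, T j := by rw [hunion]; exact hsS
          obtain ⟨j, hj⟩ := Set.mem_iUnion.mp hsU
          by_cases hji : j = i
          · exact hji ▸ hj
          · exfalso
            apply hdiff j i hji s hj (w i) (hw i)
            rw [stmt7_smul_eq_iff, hsv, ← hiv]
        · intro hs
          refine ⟨hTS i hs, ?_⟩
          simp only [Set.mem_preimage, Set.mem_singleton_iff]
          have hsm := hsame i s hs (w i) (hw i)
          rw [stmt7_smul_eq_iff] at hsm
          rw [hsm, hiv]
      rw [hTi, hcardT]
end

section
/- Let G be a finite group and H a non-trivial proper normal subgroup of G. Then for every even integer k with 2 ≤ k ≤ |H|, there exists an inverse-closed subset S of G∖{e} such that H is a (0,k)-regular set in Cay(G,S). -/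
open Set

/-- `D` is a `(0,k)`-regular set of the group `G`: it is a `(0,k)`-regular set in some
Cayley graph of `G` (with inverse-closed connection set avoiding the identity). -/
def IsRegularSetOfGroup (G : Type*) [Group G] (D : Set G) (k : ℕ) : Prop :=
  ∃ S : Set G, (1 : G) ∉ S ∧ (∀ s ∈ S, s⁻¹ ∈ S) ∧ IsRegularSet (cayley S) D 0 k

private lemma exists_symm_subset {G : Type*} [Group G] :
    ∀ (k : ℕ), Even k → ∀ (T : Set G), T.Finite → (∀ x ∈ T, x⁻¹ ∈ T) → k ≤ T.ncard →
    ∃ B, B ⊆ T ∧ (∀ x ∈ B, x⁻¹ ∈ B) ∧ B.ncard = k := by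
  intro k
  induction k using Nat.strong_induction_on with
  | _ k ih =>
    intro hke T hTfin hTsymm hk
    rcases Nat.eq_zero_or_pos k with rfl | hpos
    · exact ⟨∅, empty_subset _, by simp, by simp⟩
    have hk2 : 2 ≤ k := by
      have := hke.two_dvd
      omega
    by_cases hex : ∃ x ∈ T, x⁻¹ ≠ x
    · obtain ⟨x, hxT, hx⟩ := hex
      have hpair : ({x, x⁻¹} : Set G) ⊆ T := by
        intro y hy
        rcases hy with rfl | hy
        · exact hxT
        · simp only [mem_singleton_iff] at hy
          subst hy
          exact hTsymm x hxT
      have hpc : ({x, x⁻¹} : Set G).ncard = 2 := Set.ncard_pair (Ne.symm hx)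
      have hdiffcard : (T \ {x, x⁻¹}).ncard = T.ncard - 2 := by
        rw [Set.ncard_diff hpair, hpc]
      have hke' : Even (k - 2) := by
        obtain ⟨m, rfl⟩ := hke
        exact ⟨m - 1, by omega⟩
      have hsymm' : ∀ y ∈ T \ {x, x⁻¹}, y⁻¹ ∈ T \ {x, x⁻¹} := by
        intro y hy
        obtain ⟨hyT, hyp⟩ := hy
        refine ⟨hTsymm y hyT, ?_⟩
        simp only [mem_insert_iff, mem_singleton_iff] at hyp ⊢
        push_neg at hyp ⊢
        constructor
        · intro h; exact hyp.2 (by rw [← h, inv_inv])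
        · intro h; exact hyp.1 (by rw [← inv_inv y, h, inv_inv])
      obtain ⟨B, hBsub, hBsymm, hBcard⟩ := ih (k - 2) (by omega) hke' (T \ {x, x⁻¹})
        (hTfin.diff) hsymm' (by omega)
      refine ⟨B ∪ {x, x⁻¹}, ?_, ?_, ?_⟩
      · exact Set.union_subset (hBsub.trans Set.diff_subset) hpair
      · intro y hy
        rcases hy with hy | hy
        · exact Or.inl (hBsymm y hy)
        · rcases hy with rfl | hy
          · exact Or.inr (Or.inr rfl)
          · simp only [mem_singleton_iff] at hy
            subst hy
            simp
      · rw [Set.ncard_union_eq ?_ (hTfin.subset (hBsub.trans Set.diff_subset))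
          (hTfin.subset hpair), hBcard, hpc]
        · omega
        · exact Set.disjoint_of_subset_left hBsub disjoint_sdiff_left
    · push_neg at hex
      obtain ⟨B, hBT, hBcard⟩ := Set.exists_subset_card_eq hk
      exact ⟨B, hBT, fun x hx => by rw [hex x (hBT hx)]; exact hx, hBcard⟩

private lemma cayley_adj {G : Type*} [Group G] (S : Set G) (x y : G) :
    (cayley S).Adj x y ↔ x ≠ y ∧ y * x⁻¹ ∈ S ∧ x * y⁻¹ ∈ S := Iff.rfl

theorem stmt10 {G : Type*} [Group G] [Fintype G] (H : Subgroup G) [H.Normal]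
    (hbot : H ≠ ⊥) (htop : H ≠ ⊤) (k : ℕ) (hk2 : 2 ≤ k) (hkH : k ≤ Nat.card H)
    (hke : Even k) :
    IsRegularSetOfGroup G (H : Set G) k := by
  classical
  haveI : Fintype (G ⧸ H) := Fintype.ofFinite _
  letI : LinearOrder (G ⧸ H) := LinearOrder.lift' (Fintype.equivFin (G ⧸ H)) (Equiv.injective _)
  set fib : G ⧸ H → Set G := fun q => {x : G | (x : G ⧸ H) = q} with hfib
  have hfibinv : ∀ (q : G ⧸ H) (x : G), x ∈ fib q → x⁻¹ ∈ fib q⁻¹ := by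
    intro q x hx
    simp only [hfib, mem_setOf_eq] at hx ⊢
    rw [QuotientGroup.mk_inv, hx]
  have hfibcard : ∀ q : G ⧸ H, (fib q).ncard = Nat.card H := by
    intro q
    obtain ⟨g, hg⟩ := QuotientGroup.mk_surjective q
    have himg : fib q = (fun h => g * h) '' (H : Set G) := by
      ext x
      simp only [hfib, mem_setOf_eq, mem_image, SetLike.mem_coe]
      constructor
      · intro hx
        exact ⟨g⁻¹ * x, (QuotientGroup.eq).mp (by rw [hg, hx]), by group⟩
      · rintro ⟨h, hh, rfl⟩
        rw [← hg]
        exact ((QuotientGroup.eq).mpr (by simpa using hh)).symm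
    rw [himg, Set.ncard_image_of_injective _ (mul_right_injective g),
      ← Nat.card_coe_set_eq, SetLike.coe_sort_coe]
  have hCex : ∀ q : G ⧸ H, ∃ C, C ⊆ fib q ∧ C.ncard = k := by
    intro q
    exact Set.exists_subset_card_eq (by rw [hfibcard]; exact hkH)
  choose Cs hCsub hCcard using hCex
  have hBex : ∀ q : G ⧸ H, ∃ B, B ⊆ fib q ∧ (∀ x ∈ B, x⁻¹ ∈ B) ∧ (q⁻¹ = q → B.ncard = k) := by
    intro q
    by_cases hq : q⁻¹ = q
    · obtain ⟨B, h1, h2, h3⟩ := exists_symm_subset k hke (fib q) (toFinite _)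
        (fun x hx => by have := hfibinv q x hx; rwa [hq] at this)
        (by rw [hfibcard]; exact hkH)
      exact ⟨B, h1, h2, fun _ => h3⟩
    · exact ⟨∅, empty_subset _, by simp, fun h => absurd h hq⟩
  choose Bs hBsub hBsymm hBcard using hBex
  set F : G ⧸ H → Set G := fun q =>
    if q = 1 then ∅ else if q⁻¹ = q then Bs q else if q < q⁻¹ then Cs q else (Cs q⁻¹)⁻¹ with hF
  set S : Set G := ⋃ q, F q with hS
  have hFsub : ∀ q, F q ⊆ fib q := by
    intro q
    simp only [hF]
    split_ifs with h1 h2 h3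
    · exact empty_subset _
    · exact hBsub q
    · exact hCsub q
    · intro x hx
      have hx' : x⁻¹ ∈ Cs q⁻¹ := Set.mem_inv.mp hx
      have := hfibinv q⁻¹ x⁻¹ (hCsub q⁻¹ hx')
      rwa [inv_inv, inv_inv] at this
  have hFinv : ∀ q x, x ∈ F q → x⁻¹ ∈ F q⁻¹ := by
    intro q x hx
    by_cases h1 : q = 1
    · subst h1
      simp only [hF, if_pos rfl] at hx
      exact absurd hx (notMem_empty x)
    by_cases h2 : q⁻¹ = q
    · simp only [hF, if_neg h1, if_pos h2] at hx
      rw [h2]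
      simp only [hF, if_neg h1, if_pos h2]
      exact hBsymm q x hx
    have h1' : q⁻¹ ≠ 1 := fun h => h1 (by rw [← inv_inv q, h, inv_one])
    have h2' : ¬((q⁻¹)⁻¹ = q⁻¹) := by rw [inv_inv]; exact fun h => h2 h.symm
    by_cases h3 : q < q⁻¹
    · simp only [hF, if_neg h1, if_neg h2, if_pos h3] at hx
      have h3' : ¬(q⁻¹ < (q⁻¹)⁻¹) := by rw [inv_inv]; exact not_lt.mpr h3.le
      have hFq : F q⁻¹ = (Cs ((q⁻¹)⁻¹))⁻¹ := by
        simp only [hF]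
        rw [if_neg h1', if_neg h2', if_neg h3']
      rw [hFq, inv_inv]
      exact Set.inv_mem_inv.mpr hx
    · simp only [hF, if_neg h1, if_neg h2, if_neg h3] at hx
      have h3' : q⁻¹ < (q⁻¹)⁻¹ := by
        rw [inv_inv]
        exact lt_of_le_of_ne (not_lt.mp h3) h2
      have hFq : F q⁻¹ = Cs q⁻¹ := by
        simp only [hF]
        rw [if_neg h1', if_neg h2', if_pos h3']
      rw [hFq]
      exact Set.mem_inv.mp hx
  have hFcard : ∀ q, q ≠ 1 → (F q).ncard = k := by
    intro q h1
    simp only [hF]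
    split_ifs with hq1 hq2 hq3
    · exact absurd hq1 h1
    · exact hBcard q hq2
    · exact hCcard q
    · rw [← Set.image_inv_eq_inv, Set.ncard_image_of_injective _ inv_injective]
      exact hCcard q⁻¹
  have hSfib : ∀ p, S ∩ fib p = F p := by
    intro p
    ext x
    constructor
    · rintro ⟨hxS, hxf⟩
      obtain ⟨q, hq⟩ := mem_iUnion.mp hxS
      have hq' : x ∈ fib q := hFsub q hq
      simp only [hfib, mem_setOf_eq] at hq' hxf
      rw [hxf] at hq'
      rw [hq']
      exact hq
    · intro hx
      exact ⟨mem_iUnion.mpr ⟨p, hx⟩, hFsub p hx⟩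
  have h1S : (1 : G) ∉ S := by
    intro h
    have h1f : (1 : G) ∈ S ∩ fib 1 :=
      ⟨h, by simp only [hfib, mem_setOf_eq, QuotientGroup.eq_one_iff]; exact H.one_mem⟩
    rw [hSfib] at h1f
    simp only [hF, if_pos rfl] at h1f
    exact notMem_empty _ h1f
  have hSinv : ∀ s ∈ S, s⁻¹ ∈ S := by
    intro s hs
    obtain ⟨q, hq⟩ := mem_iUnion.mp hs
    exact mem_iUnion.mpr ⟨q⁻¹, hFinv q s hq⟩
  refine ⟨S, h1S, hSinv, ⟨1, H.one_mem⟩, ?_, ?_, ?_⟩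
  · intro h
    apply htop
    rw [Subgroup.eq_top_iff']
    intro x
    have : x ∈ (H : Set G) := h ▸ mem_univ x
    exact this
  · intro v hv
    rw [Set.ncard_eq_zero (toFinite _)]
    ext u
    simp only [mem_setOf_eq, mem_empty_iff_false, iff_false, not_and]
    rintro ⟨hne, h1, h2⟩ huH
    have hmem : u * v⁻¹ ∈ S ∩ fib 1 := by
      refine ⟨h1, ?_⟩
      simp only [hfib, mem_setOf_eq]
      rw [QuotientGroup.eq_one_iff]
      exact H.mul_mem huH (H.inv_mem hv)
    rw [hSfib] at hmem
    simp only [hF, if_pos rfl] at hmem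
    exact notMem_empty _ hmem
  · intro v hv
    have hqv : (v : G ⧸ H) ≠ 1 := by rwa [Ne, QuotientGroup.eq_one_iff]
    have himg : {u | (cayley S).Adj v u ∧ u ∈ (H : Set G)} =
        (fun w => w * v) '' (S ∩ fib ((v : G ⧸ H)⁻¹)) := by
      ext u
      simp only [mem_setOf_eq, mem_image, mem_inter_iff, cayley_adj, SetLike.mem_coe,
        hfib]
      constructor
      · rintro ⟨⟨hne, h1, h2⟩, huH⟩
        refine ⟨u * v⁻¹, ⟨h1, ?_⟩, by group⟩
        rw [QuotientGroup.mk_mul, QuotientGroup.mk_inv,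
          (QuotientGroup.eq_one_iff u).mpr huH, one_mul]
      · rintro ⟨w, ⟨hwS, hwq⟩, rfl⟩
        have huH : w * v ∈ H := by
          rw [← QuotientGroup.eq_one_iff, QuotientGroup.mk_mul, hwq, inv_mul_cancel]
        refine ⟨⟨?_, ?_, ?_⟩, huH⟩
        · intro h
          have hw1 : w = 1 := right_eq_mul.mp h
          rw [hw1] at hwS
          exact h1S hwS
        · simpa using hwS
        · have hw' := hSinv w hwS
          have : v * (w * v)⁻¹ = w⁻¹ := by group
          rwa [this]
    rw [himg, Set.ncard_image_of_injective _ (mul_left_injective v), hSfib,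
      hFcard _ (by simpa using hqv)]
end

section
/- Let G be a finite group and H a non-trivial proper normal subgroup of G, and let k be an odd integer with 1 ≤ k ≤ |H|. Then H is a (0,k)-regular set of G if and only if for every g ∈ G with g² ∈ H there exists h ∈ H such that (gh)² = e. -/
open Set

lemma aux_exists_inv_eq_of_odd {G : Type*} [Group G] :
    ∀ n (s : Set G), s.Finite → s.ncard = n → (∀ x ∈ s, x⁻¹ ∈ s) → Odd n →
      ∃ x ∈ s, x⁻¹ = x := by
  intro n
  induction n using Nat.strong_induction_on with
  | _ n ih =>
    intro s hfin hcard hinv hodd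
    have hpos : 0 < n := hodd.pos
    have hne : s.Nonempty := by
      rw [← Set.ncard_pos hfin, hcard]; exact hpos
    obtain ⟨x, hx⟩ := hne
    by_cases hxx : x⁻¹ = x
    · exact ⟨x, hx, hxx⟩
    · have hxi : x⁻¹ ∈ s := hinv x hx
      have hpair : ({x, x⁻¹} : Set G) ⊆ s := by
        intro z hz; rcases hz with rfl | hz
        · exact hx
        · simp only [Set.mem_singleton_iff] at hz; subst hz; exact hxi
      have hpaircard : ({x, x⁻¹} : Set G).ncard = 2 :=
        Set.ncard_pair (by simpa [eq_comm] using hxx)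
      have hcard' : (s \ ({x, x⁻¹} : Set G)).ncard = n - 2 := by
        rw [Set.ncard_diff hpair (Set.Finite.subset hfin hpair), hpaircard, hcard]
      have hn2 : 2 ≤ n := by
        have := Set.ncard_le_ncard hpair hfin
        rw [hpaircard, hcard] at this; exact this
      have hinv' : ∀ y ∈ s \ ({x, x⁻¹} : Set G), y⁻¹ ∈ s \ ({x, x⁻¹} : Set G) := by
        rintro y ⟨hys, hyn⟩
        refine ⟨hinv y hys, ?_⟩
        rintro (h1 | h2)
        · apply hyn; right
          rw [Set.mem_singleton_iff, ← h1, inv_inv]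
        · apply hyn; left
          rw [Set.mem_singleton_iff] at h2
          rw [← inv_inv y, h2, inv_inv]
      have hoddm : Odd (n - 2) := Nat.Odd.sub_even hn2 hodd (by norm_num)
      obtain ⟨z, hz, hzz⟩ := ih (n - 2) (by omega) _ (hfin.subset Set.diff_subset) hcard' hinv' hoddm
      exact ⟨z, hz.1, hzz⟩

lemma aux_exists_invclosed_subset {G : Type*} [Group G] :
    ∀ k (s : Set G), s.Finite → (∀ x ∈ s, x⁻¹ ∈ s) → k ≤ s.ncard →
      (Odd k → ∃ x ∈ s, x⁻¹ = x) →
      ∃ t, t ⊆ s ∧ t.ncard = k ∧ ∀ x ∈ t, x⁻¹ ∈ t := by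
  intro k
  induction k using Nat.strong_induction_on with
  | _ k ih =>
    intro s hfin hinv hk hfix
    match k, ih with
    | 0, _ => exact ⟨∅, Set.empty_subset _, Set.ncard_empty _, by simp⟩
    | 1, _ =>
      obtain ⟨x, hx, hxx⟩ := hfix (by norm_num)
      exact ⟨{x}, by simpa using hx, Set.ncard_singleton _, by simp [hxx]⟩
    | (m + 2), ih =>
      have hfix' : Odd m → ∃ x ∈ s, x⁻¹ = x := fun h => hfix (by
        rcases h with ⟨j, hj⟩; exact ⟨j + 1, by omega⟩)
      obtain ⟨t, hts, htc, htinv⟩ := ih m (by omega) s hfin hinv (by omega) hfix'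
      have htfin : t.Finite := hfin.subset hts
      have hdc : (s \ t).ncard = s.ncard - m := by
        rw [Set.ncard_diff hts htfin, htc]
      have hd2 : 2 ≤ (s \ t).ncard := by omega
      have hdne : (s \ t).Nonempty := by
        rw [← Set.ncard_pos (hfin.subset Set.diff_subset)]; omega
      obtain ⟨x, hxs, hxt⟩ := hdne
      -- helper to add an invariant pair {a, b} (with a ≠ b, a⁻¹ = b or both self-inverse)
      have addpair : ∀ a b : G, a ∈ s → b ∈ s → a ∉ t → b ∉ t → a ≠ b →
          (a⁻¹ = b ∨ (a⁻¹ = a ∧ b⁻¹ = b)) →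
          ∃ t', t' ⊆ s ∧ t'.ncard = m + 2 ∧ ∀ x ∈ t', x⁻¹ ∈ t' := by
        intro a b has hbs hat hbt hab hio
        refine ⟨insert a (insert b t), ?_, ?_, ?_⟩
        · intro z hz
          rcases hz with rfl | rfl | hz
          · exact has
          · exact hbs
          · exact hts hz
        · rw [Set.ncard_insert_of_notMem (by
              rintro (rfl | h); exact hab rfl; exact hat h)
              ((htfin.insert b)),
            Set.ncard_insert_of_notMem hbt htfin, htc]
        · intro z hz
          rcases hz with rfl | rfl | hz
          · rcases hio with h | ⟨h1, h2⟩
            · right; left; exact h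
            · left; exact h1
          · rcases hio with h | ⟨h1, h2⟩
            · left; rw [← h, inv_inv]
            · right; left; exact h2
          · right; right; exact htinv z hz
      by_cases hxx : x⁻¹ = x
      · -- need second element
        have h1 : (s \ insert x t).ncard = s.ncard - (m + 1) := by
          rw [Set.ncard_diff (by
            intro z hz; rcases hz with rfl | hz; exact hxs; exact hts hz)
            (htfin.insert x), Set.ncard_insert_of_notMem hxt htfin, htc]
        have hdne2 : (s \ insert x t).Nonempty := by
          rw [← Set.ncard_pos (hfin.subset Set.diff_subset)]; omega
        obtain ⟨y, hys, hyt⟩ := hdne2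
        have hyx : y ≠ x := fun h => hyt (h ▸ Set.mem_insert x t)
        have hytt : y ∉ t := fun h => hyt (Set.mem_insert_of_mem _ h)
        by_cases hyy : y⁻¹ = y
        · exact addpair x y hxs hys hxt hytt (Ne.symm hyx) (Or.inr ⟨hxx, hyy⟩)
        · have hyinv : y⁻¹ ∈ s := hinv y hys
          have hyit : y⁻¹ ∉ t := fun h => by
            have := htinv _ h; rw [inv_inv] at this; exact hytt this
          exact addpair y y⁻¹ hys hyinv hytt hyit (fun h => hyy h.symm) (Or.inl rfl)
      · have hxinv : x⁻¹ ∈ s := hinv x hxs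
        have hxit : x⁻¹ ∉ t := fun h => by
          have := htinv _ h; rw [inv_inv] at this; exact hxt this
        exact addpair x x⁻¹ hxs hxinv hxt hxit (fun h => hxx h.symm) (Or.inl rfl)

theorem stmt11 {G : Type*} [Group G] [Fintype G] (H : Subgroup G) [H.Normal]
    (hbot : H ≠ ⊥) (htop : H ≠ ⊤) (k : ℕ) (hk1 : 1 ≤ k) (hkH : k ≤ Nat.card H)
    (hko : Odd k) :
    IsRegularSetOfGroup G (H : Set G) k ↔
      ∀ g : G, g ^ 2 ∈ H → ∃ h ∈ H, (g * h) ^ 2 = 1 := by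
  constructor
  · intro hreg
    obtain ⟨S, h1S, hSinv, hne, hprop, h0, hk⟩ := hreg
    intro g hg2
    by_cases hgH : g ∈ H
    · exact ⟨g⁻¹, H.inv_mem hgH, by simp⟩
    · have hcnt := hk g hgH
      set N : Set G := {u | (cayley S).Adj g u ∧ u ∈ (H : Set G)} with hN
      set M : Set G := S ∩ {w | w * g ∈ H} with hM
      have hMN : M = (fun u => u * g⁻¹) '' N := by
        ext w
        constructor
        · rintro ⟨hwS, hwg⟩
          refine ⟨w * g, ⟨⟨?_, ?_, ?_⟩, hwg⟩, by group⟩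
          · intro h
            have hw1 : w = 1 := mul_right_cancel (b := g) (by rw [one_mul, ← h])
            rw [hw1] at hwS; exact h1S hwS
          · simpa using hwS
          · have hw' : w⁻¹ ∈ S := hSinv w hwS
            have heq : g * (w * g)⁻¹ = w⁻¹ := by group
            rw [heq]; exact hw'
        · rintro ⟨u, ⟨⟨hne', huS, hgu⟩, huH⟩, rfl⟩
          refine ⟨by simpa using huS, ?_⟩
          simpa using huH
      have hMcard : M.ncard = k := by
        rw [hMN, Set.ncard_image_of_injective _ (mul_left_injective g⁻¹)]
        exact hcnt
      have hMinv : ∀ w ∈ M, w⁻¹ ∈ M := by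
        rintro w ⟨hwS, hwg⟩
        refine ⟨hSinv w hwS, ?_⟩
        have hgw : g * w ∈ H := by
          have := H.mul_mem hwg hg2  -- (w*g)*g^2? not directly
          have hconj : g * (w * g) * g⁻¹ ∈ H := Subgroup.Normal.conj_mem ‹H.Normal› _ hwg g
          have : g * (w * g) * g⁻¹ = g * w := by group
          rwa [this] at hconj
        have h1 : w⁻¹ * g⁻¹ ∈ H := by
          have := H.inv_mem hgw
          rwa [mul_inv_rev] at this
        have : w⁻¹ * g⁻¹ * g ^ 2 = w⁻¹ * g := by group
        have h2 : w⁻¹ * g⁻¹ * g ^ 2 ∈ H := H.mul_mem h1 hg2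
        rwa [this] at h2
      obtain ⟨w, ⟨hwS, hwg⟩, hww⟩ :=
        aux_exists_inv_eq_of_odd k M (Set.toFinite M) hMcard hMinv hko
      refine ⟨(w * g)⁻¹, H.inv_mem hwg, ?_⟩
      have hgwg : g * (w * g)⁻¹ = w⁻¹ := by group
      rw [hgwg, sq]
      nth_rewrite 2 [hww]
      exact inv_mul_cancel w
  · intro hsol
    classical
    set cst : (G ⧸ H) → Set G := fun q => QuotientGroup.mk ⁻¹' {q} with hcstdef
    have hmem_cst : ∀ (q : G ⧸ H) (x : G), x ∈ cst q ↔ (x : G ⧸ H) = q := by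
      intro q x; simp [hcstdef]
    -- cardinality of cosets
    have hcst_card : ∀ q : G ⧸ H, (cst q).ncard = Nat.card H := by
      intro q
      obtain ⟨y, rfl⟩ := QuotientGroup.mk_surjective q
      have himg : cst (y : G ⧸ H) = (fun h => y * h) '' (H : Set G) := by
        ext g
        rw [hmem_cst]
        constructor
        · intro hg
          have : y⁻¹ * g ∈ H := QuotientGroup.eq.mp hg.symm
          exact ⟨y⁻¹ * g, this, by group⟩
        · rintro ⟨h, hh, rfl⟩
          exact (QuotientGroup.eq.mpr (by simpa using hh)).symm
      rw [himg, Set.ncard_image_of_injective _ (mul_right_injective y)]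
      rw [← Nat.card_coe_set_eq]
      rfl
    have hcst_inv : ∀ (q : G ⧸ H) (x : G), x ∈ cst q → x⁻¹ ∈ cst q⁻¹ := by
      intro q x hx
      rw [hmem_cst] at hx ⊢
      rw [QuotientGroup.mk_inv, hx]
    -- fixed points in symmetric cosets
    have hfix : ∀ q : G ⧸ H, q⁻¹ = q → ∃ x ∈ cst q, x⁻¹ = x := by
      intro q hq
      obtain ⟨y, rfl⟩ := QuotientGroup.mk_surjective q
      have hy2 : y ^ 2 ∈ H := by
        rw [← QuotientGroup.eq_one_iff, sq, QuotientGroup.mk_mul]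
        nth_rewrite 1 [← hq]
        rw [inv_mul_cancel]
      obtain ⟨h, hh, hsq⟩ := hsol y hy2
      refine ⟨y * h, ?_, ?_⟩
      · rw [hmem_cst, QuotientGroup.mk_mul, (QuotientGroup.eq_one_iff h).mpr hh, mul_one]
      · rw [sq] at hsq
        exact inv_eq_of_mul_eq_one_left hsq
    -- choose subsets
    have hB : ∀ q : G ⧸ H, ∃ t, t ⊆ cst q ∧ t.ncard = k ∧
        (q⁻¹ = q → ∀ x ∈ t, x⁻¹ ∈ t) := by
      intro q
      by_cases hq : q⁻¹ = q
      · obtain ⟨t, h1, h2, h3⟩ := aux_exists_invclosed_subset k (cst q) (Set.toFinite _)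
          (fun x hx => by rw [← hq]; exact hcst_inv q x hx)
          (by rw [hcst_card]; exact hkH) (fun _ => hfix q hq)
        exact ⟨t, h1, h2, fun _ => h3⟩
      · obtain ⟨t, h1, h2⟩ := Set.exists_subset_card_eq
          (show k ≤ (cst q).ncard by rw [hcst_card]; exact hkH)
        exact ⟨t, h1, h2, fun h => absurd h hq⟩
    choose B hB1 hB2 hB3 using hB
    obtain ⟨L, hL⟩ := Countable.exists_injective_nat (G ⧸ H)
    set T : (G ⧸ H) → Set G := fun q =>
      if q⁻¹ = q then B q else if L q < L q⁻¹ then B q else (B q⁻¹)⁻¹ with hTdef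
    have hT_sub : ∀ q, T q ⊆ cst q := by
      intro q
      simp only [hTdef]
      split_ifs with h1 h2
      · exact hB1 q
      · exact hB1 q
      · intro x hx
        have hxi : x⁻¹ ∈ cst q⁻¹ := hB1 q⁻¹ (by simpa using hx)
        have := hcst_inv q⁻¹ x⁻¹ hxi
        simpa using this
    have hT_card : ∀ q, (T q).ncard = k := by
      intro q
      simp only [hTdef]
      split_ifs with h1 h2
      · exact hB2 q
      · exact hB2 q
      · rw [Set.ncard_inv]; exact hB2 q⁻¹
    have hT_inv : ∀ q (x : G), x ∈ T q → x⁻¹ ∈ T q⁻¹ := by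
      intro q x hx
      simp only [hTdef] at hx ⊢
      by_cases h1 : q⁻¹ = q
      · rw [if_pos h1] at hx
        rw [h1, if_pos h1]
        exact hB3 q h1 x hx
      · have h1' : ¬ (q⁻¹)⁻¹ = q⁻¹ := by rw [inv_inv]; exact fun h => h1 h.symm
        have hLne : L q ≠ L q⁻¹ := fun h => h1 (hL h).symm
        rw [if_neg h1] at hx
        rw [if_neg h1']
        by_cases h2 : L q < L q⁻¹
        · rw [if_pos h2] at hx
          rw [if_neg (by rw [inv_inv]; omega), inv_inv]
          simpa using hx
        · rw [if_neg h2] at hx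
          rw [if_pos (by rw [inv_inv]; omega)]
          simpa using hx
    -- the connection set
    set S : Set G := ⋃ q ∈ {q : G ⧸ H | q ≠ 1}, T q with hSdef
    have hS_mem : ∀ x : G, x ∈ S ↔ ((x : G ⧸ H) ≠ 1 ∧ x ∈ T ((x : G ⧸ H))) := by
      intro x
      rw [hSdef]
      simp only [Set.mem_iUnion, Set.mem_setOf_eq, exists_prop]
      constructor
      · rintro ⟨q, hq1, hqx⟩
        have : (x : G ⧸ H) = q := (hmem_cst q x).mp (hT_sub q hqx)
        rw [this]; exact ⟨hq1, hqx⟩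
      · rintro ⟨h1, h2⟩; exact ⟨_, h1, h2⟩
    have h1S : (1 : G) ∉ S := by
      rw [hS_mem]; rintro ⟨h1, -⟩; exact h1 (by simp)
    have hSinv : ∀ s ∈ S, s⁻¹ ∈ S := by
      intro s hs
      rw [hS_mem] at hs ⊢
      obtain ⟨h1, h2⟩ := hs
      constructor
      · rw [QuotientGroup.mk_inv]
        simpa using h1
      · rw [QuotientGroup.mk_inv]
        exact hT_inv _ s h2
    refine ⟨S, h1S, hSinv, ⟨1, H.one_mem⟩, ?_, ?_, ?_⟩
    · intro hu
      apply htop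
      rw [Subgroup.eq_top_iff']
      intro x
      have : x ∈ (H : Set G) := hu ▸ Set.mem_univ x
      exact this
    · intro v hv
      have : {u | (cayley S).Adj v u ∧ u ∈ (H : Set G)} = ∅ := by
        rw [Set.eq_empty_iff_forall_notMem]
        rintro u ⟨⟨hne', huv, hvu⟩, huH⟩
        rw [hS_mem] at huv
        apply huv.1
        rw [QuotientGroup.eq_one_iff]
        exact H.mul_mem huH (H.inv_mem hv)
      rw [this, Set.ncard_empty]
    · intro v hv
      set q : G ⧸ H := ((v : G ⧸ H))⁻¹ with hqdef
      have hq1 : q ≠ 1 := by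
        rw [hqdef]
        intro h
        apply hv
        have : v ∈ H := (QuotientGroup.eq_one_iff v).mp
          (by rw [← inv_inv ((v : G) : G ⧸ H), h, inv_one])
        exact this
      have himg : (fun u => u * v⁻¹) '' {u | (cayley S).Adj v u ∧ u ∈ (H : Set G)}
          = S ∩ cst q := by
        ext w
        constructor
        · rintro ⟨u, ⟨⟨hne', huv, hvu⟩, huH⟩, rfl⟩
          refine ⟨huv, ?_⟩
          rw [hmem_cst, hqdef, QuotientGroup.mk_mul, QuotientGroup.mk_inv,
            (QuotientGroup.eq_one_iff u).mpr huH, one_mul]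
        · rintro ⟨hwS, hwq⟩
          rw [hmem_cst, hqdef] at hwq
          refine ⟨w * v, ⟨⟨?_, ?_, ?_⟩, ?_⟩, by group⟩
          · intro h
            apply hv
            have hw1 : w = 1 := mul_right_cancel (b := v) (by rw [one_mul, ← h])
            rw [hw1, QuotientGroup.mk_one] at hwq
            have : v ∈ H := (QuotientGroup.eq_one_iff v).mp
              (by rw [← inv_inv ((v : G) : G ⧸ H), ← hwq, inv_one])
            exact this
          · have : w * v * v⁻¹ = w := by group
            rw [this]; exact hwS
          · have heq : v * (w * v)⁻¹ = w⁻¹ := by group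
            rw [heq]; exact hSinv w hwS
          · rw [SetLike.mem_coe, ← QuotientGroup.eq_one_iff, QuotientGroup.mk_mul,
              hwq, inv_mul_cancel]
      have hScst : S ∩ cst q = T q := by
        ext x
        constructor
        · rintro ⟨hxS, hxq⟩
          rw [hS_mem] at hxS
          rw [hmem_cst] at hxq
          rw [← hxq]; exact hxS.2
        · intro hx
          have hxq : x ∈ cst q := hT_sub q hx
          rw [hmem_cst] at hxq
          refine ⟨?_, hT_sub q hx⟩
          rw [hS_mem, hxq]
          exact ⟨hq1, hx⟩
      have := congrArg Set.ncard himg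
      rw [Set.ncard_image_of_injective _ (mul_left_injective v⁻¹), hScst, hT_card] at this
      exact this
end

section
/- Let G be a finite group and H a non-trivial proper normal subgroup of G. If |H| is odd or |G:H| is odd, then for any odd integer k with 1 ≤ k ≤ |H|, H is a (0,k)-regular set of G. -/
open Set

section Aux

variable {G : Type*} [Group G]

lemma aux_exists_inv_pair (C : Set G) (hfin : C.Finite) (hcl : ∀ x ∈ C, x⁻¹ ∈ C)
    (h2 : 2 ≤ C.ncard) :
    ∃ D, D ⊆ C ∧ (∀ x ∈ D, x⁻¹ ∈ D) ∧ D.ncard = 2 := by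
  have hne : C.Nonempty := Set.nonempty_of_ncard_ne_zero (by omega)
  obtain ⟨x, hx⟩ := hne
  by_cases hxx : x⁻¹ = x
  · obtain ⟨y, hy, hyx⟩ := Set.exists_ne_of_one_lt_ncard h2 x
    by_cases hyy : y⁻¹ = y
    · refine ⟨{x, y}, ?_, ?_, Set.ncard_pair (Ne.symm hyx)⟩
      · intro z hz
        rcases hz with rfl | hz
        · exact hx
        · rw [Set.mem_singleton_iff] at hz; exact hz ▸ hy
      · intro z hz
        rcases hz with rfl | hz
        · exact Or.inl hxx
        · rw [Set.mem_singleton_iff] at hz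
          subst hz
          exact Or.inr (by simp [hyy])
    · refine ⟨{y, y⁻¹}, ?_, ?_, Set.ncard_pair (fun h => hyy h.symm)⟩
      · intro z hz
        rcases hz with rfl | hz
        · exact hy
        · rw [Set.mem_singleton_iff] at hz; exact hz ▸ hcl y hy
      · intro z hz
        rcases hz with rfl | hz
        · exact Or.inr rfl
        · rw [Set.mem_singleton_iff] at hz
          subst hz
          exact Or.inl (by simp)
  · refine ⟨{x, x⁻¹}, ?_, ?_, Set.ncard_pair (fun h => hxx h.symm)⟩
    · intro z hz
      rcases hz with rfl | hz
      · exact hx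
      · rw [Set.mem_singleton_iff] at hz; exact hz ▸ hcl x hx
    · intro z hz
      rcases hz with rfl | hz
      · exact Or.inr rfl
      · rw [Set.mem_singleton_iff] at hz
        subst hz
        exact Or.inl (by simp)

lemma aux_exists_inv_closed_even :
    ∀ (k : ℕ) (C : Set G), Even k → C.Finite → (∀ x ∈ C, x⁻¹ ∈ C) → k ≤ C.ncard →
      ∃ T, T ⊆ C ∧ (∀ x ∈ T, x⁻¹ ∈ T) ∧ T.ncard = k := by
  intro k
  induction k using Nat.strong_induction_on with
  | _ k ih =>
    intro C hk hfin hcl hkle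
    rcases Nat.eq_zero_or_pos k with rfl | hpos
    · exact ⟨∅, empty_subset _, by simp, by simp⟩
    have h2k : 2 ≤ k := by
      rcases hk with ⟨m, rfl⟩; omega
    obtain ⟨D, hDC, hDinv, hD2⟩ := aux_exists_inv_pair C hfin hcl (le_trans h2k hkle)
    have hfin' : (C \ D).Finite := hfin.diff
    have hcl' : ∀ x ∈ C \ D, x⁻¹ ∈ C \ D := by
      rintro x ⟨hxC, hxD⟩
      refine ⟨hcl x hxC, fun h => hxD ?_⟩
      simpa using hDinv _ h
    have hcard' : k - 2 ≤ (C \ D).ncard := by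
      rw [Set.ncard_diff hDC (hfin.subset hDC), hD2]; omega
    obtain ⟨T', hT'C, hT'inv, hT'card⟩ := ih (k - 2) (by omega)
      (C \ D) (by rcases hk with ⟨m, rfl⟩; exact ⟨m - 1, by omega⟩) hfin' hcl' hcard'
    refine ⟨T' ∪ D, union_subset (hT'C.trans diff_subset) hDC, ?_, ?_⟩
    · rintro x (hx | hx)
      · exact Or.inl (hT'inv x hx)
      · exact Or.inr (hDinv x hx)
    · rw [Set.ncard_union_eq (Set.disjoint_of_subset_left hT'C disjoint_sdiff_left)
        (hfin'.subset hT'C) (hfin.subset hDC), hT'card, hD2]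
      omega

lemma aux_exists_fixed_of_odd :
    ∀ (n : ℕ) (C : Set G), C.ncard = n → C.Finite → (∀ x ∈ C, x⁻¹ ∈ C) → Odd n →
      ∃ x ∈ C, x⁻¹ = x := by
  intro n
  induction n using Nat.strong_induction_on with
  | _ n ih =>
    intro C hn hfin hcl hodd
    have hne : C.Nonempty := Set.nonempty_of_ncard_ne_zero (by
      rcases hodd with ⟨m, rfl⟩; omega)
    obtain ⟨x, hx⟩ := hne
    by_cases hxx : x⁻¹ = x
    · exact ⟨x, hx, hxx⟩
    have hD : ({x, x⁻¹} : Set G) ⊆ C := by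
      rintro z (rfl | rfl) <;> [exact hx; exact hcl x hx]
    have hD2 : ({x, x⁻¹} : Set G).ncard = 2 := Set.ncard_pair (fun h => hxx h.symm)
    have h2n : 2 ≤ n := by
      rw [← hn, ← hD2]; exact Set.ncard_le_ncard hD hfin
    have hcl' : ∀ z ∈ C \ ({x, x⁻¹} : Set G), z⁻¹ ∈ C \ ({x, x⁻¹} : Set G) := by
      rintro z ⟨hzC, hzD⟩
      refine ⟨hcl z hzC, fun h => hzD ?_⟩
      rcases h with h | h
      · exact Or.inr (by rw [Set.mem_singleton_iff, ← h, inv_inv])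
      · rw [Set.mem_singleton_iff] at h
        exact Or.inl (inv_injective h)
    have hcard' : (C \ ({x, x⁻¹} : Set G)).ncard = n - 2 := by
      rw [Set.ncard_diff hD (hfin.subset hD), hD2, hn]
    obtain ⟨y, hy, hyy⟩ := ih (n - 2) (by omega) _ hcard' hfin.diff hcl'
      (by rcases hodd with ⟨m, rfl⟩; exact ⟨m - 1, by omega⟩)
    exact ⟨y, hy.1, hyy⟩

lemma aux_exists_inv_closed_odd (k : ℕ) (C : Set G) (hk : Odd k)
    (hfin : C.Finite) (hcl : ∀ x ∈ C, x⁻¹ ∈ C) (hkle : k ≤ C.ncard) (hCodd : Odd C.ncard) :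
    ∃ T, T ⊆ C ∧ (∀ x ∈ T, x⁻¹ ∈ T) ∧ T.ncard = k := by
  obtain ⟨x, hxC, hxfix⟩ := aux_exists_fixed_of_odd C.ncard C rfl hfin hcl hCodd
  have hcl' : ∀ z ∈ C \ {x}, z⁻¹ ∈ C \ {x} := by
    rintro z ⟨hzC, hzx⟩
    refine ⟨hcl z hzC, fun h => hzx ?_⟩
    simp only [mem_singleton_iff] at h ⊢
    rw [← inv_inv z, h, hxfix]
  have hcard' : k - 1 ≤ (C \ {x} : Set G).ncard := by
    rw [Set.ncard_diff (singleton_subset_iff.mpr hxC) (Set.finite_singleton x), Set.ncard_singleton]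
    omega
  obtain ⟨T', hT'C, hT'inv, hT'card⟩ := aux_exists_inv_closed_even (k - 1) (C \ {x})
    (by rcases hk with ⟨m, rfl⟩; exact ⟨m, by omega⟩) hfin.diff hcl' hcard'
  have hxT' : x ∉ T' := fun h => (hT'C h).2 rfl
  refine ⟨insert x T', insert_subset hxC (hT'C.trans diff_subset), ?_, ?_⟩
  · rintro z (rfl | hz)
    · exact Or.inl hxfix
    · exact Or.inr (hT'inv z hz)
  · have hk1 : 1 ≤ k := hk.pos
    rw [Set.ncard_insert_of_notMem hxT' (hfin.diff.subset hT'C), hT'card]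
    omega

end Aux

theorem stmt13 {G : Type*} [Group G] [Fintype G] (H : Subgroup G) [H.Normal]
    (hbot : H ≠ ⊥) (htop : H ≠ ⊤)
    (hodd : Odd (Nat.card H) ∨ Odd H.index)
    (k : ℕ) (hk1 : 1 ≤ k) (hkH : k ≤ Nat.card H) (hko : Odd k) :
    IsRegularSetOfGroup G (H : Set G) k := by
  classical
  obtain ⟨enc, henc⟩ := Countable.exists_injective_nat (G ⧸ H)
  set R : Set (G ⧸ H) := {q | enc q ≤ enc q⁻¹} with hR
  -- each fiber of the quotient map has `Nat.card H` elements
  have hfib : ∀ q : G ⧸ H, {g : G | (g : G ⧸ H) = q}.ncard = Nat.card H := by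
    intro q
    obtain ⟨w, rfl⟩ := QuotientGroup.mk_surjective q
    have himg : {g : G | (g : G ⧸ H) = (w : G ⧸ H)} = (fun h => w * h) '' (H : Set G) := by
      ext g
      simp only [Set.mem_setOf_eq, Set.mem_image, SetLike.mem_coe]
      constructor
      · intro h
        refine ⟨w⁻¹ * g, ?_, by group⟩
        rw [← QuotientGroup.eq]
        exact h.symm
      · rintro ⟨h, hh, rfl⟩
        rw [eq_comm, QuotientGroup.eq]
        simpa using hh
    rw [himg, Set.ncard_image_of_injective _ (mul_right_injective w),
      ← Nat.card_coe_set_eq]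
    rfl
  -- choose the pieces of the connection set, one inside each fiber
  have hTex : ∀ q : G ⧸ H, ∃ T : Set G,
      T ⊆ {g : G | (g : G ⧸ H) = q} ∧ (q ≠ 1 → T.ncard = k) ∧
        (q⁻¹ = q → ∀ x ∈ T, x⁻¹ ∈ T) := by
    intro q
    by_cases hq1 : q = 1
    · exact ⟨∅, empty_subset _, fun h => absurd hq1 h, by simp⟩
    by_cases hq : q⁻¹ = q
    · have hqH : Odd (Nat.card H) := by
        rcases hodd with h | h
        · exact h
        · exfalso
          apply hq1
          have hcard : Odd (Nat.card (G ⧸ H)) := h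
          obtain ⟨m, hm⟩ := hcard
          have h2 : q * q = 1 := by nth_rewrite 2 [← hq]; exact mul_inv_cancel q
          have h1 : q ^ Nat.card (G ⧸ H) = 1 := pow_card_eq_one'
          rw [hm, pow_succ, pow_mul, pow_two, h2, one_pow, one_mul] at h1
          exact h1
      have hcl : ∀ x ∈ {g : G | (g : G ⧸ H) = q}, x⁻¹ ∈ {g : G | (g : G ⧸ H) = q} := by
        intro x hx
        have : ((x : G) : G ⧸ H) = q := hx
        show ((x⁻¹ : G) : G ⧸ H) = q
        rw [← hq, ← this]
        simp
      obtain ⟨T, h1, h2, h3⟩ := aux_exists_inv_closed_odd k _ hko (Set.toFinite _) hcl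
        (by rw [hfib]; exact hkH) (by rw [hfib]; exact hqH)
      exact ⟨T, h1, fun _ => h3, fun _ => h2⟩
    · obtain ⟨T, hsub, hcard⟩ := Set.exists_subset_card_eq (n := k) (by rw [hfib q]; exact hkH)
      exact ⟨T, hsub, fun _ => hcard, fun h => absurd h hq⟩
  choose T hTsub hTcard hTinv using hTex
  set S : Set G := {g | ∃ q : G ⧸ H, q ∈ R ∧ q ≠ 1 ∧ (g ∈ T q ∨ g⁻¹ ∈ T q)} with hS
  -- every element of S maps to a nontrivial class
  have hSq : ∀ g ∈ S, ((g : G) : G ⧸ H) ≠ 1 := by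
    rintro g ⟨q, hqR, hq1, hg | hg⟩
    · have : ((g : G) : G ⧸ H) = q := hTsub q hg
      rw [this]; exact hq1
    · have h1 : ((g⁻¹ : G) : G ⧸ H) = q := hTsub q hg
      have h2 : ((g : G) : G ⧸ H) = q⁻¹ := by
        rw [← h1]; simp
      rw [h2]
      simpa using hq1
  have h1S : (1 : G) ∉ S := fun h => hSq 1 h (by simp)
  have hSinv : ∀ s ∈ S, s⁻¹ ∈ S := by
    rintro s ⟨q, h1, h2, h3 | h3⟩
    · exact ⟨q, h1, h2, Or.inr (by simpa using h3)⟩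
    · exact ⟨q, h1, h2, Or.inl h3⟩
  -- the key counting fact
  have hkey : ∀ p : G ⧸ H, p ≠ 1 → (S ∩ {g : G | (g : G ⧸ H) = p}).ncard = k := by
    intro p hp
    by_cases hpR : p ∈ R
    · have he : S ∩ {g : G | (g : G ⧸ H) = p} = T p := by
        apply Set.Subset.antisymm
        · rintro g ⟨⟨q, hqR, hq1, hg | hg⟩, hgp⟩
          · have hq : ((g : G) : G ⧸ H) = q := hTsub q hg
            have : q = p := by rw [← hq]; exact hgp
            rwa [this] at hg
          · have hq : ((g⁻¹ : G) : G ⧸ H) = q := hTsub q hg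
            have hq' : q = p⁻¹ := by
              rw [← hq]
              have : ((g : G) : G ⧸ H) = p := hgp
              simp [this]
            have hpp : p⁻¹ = p := by
              apply henc
              have ha : enc p ≤ enc p⁻¹ := hpR
              have hb : enc p⁻¹ ≤ enc p := by
                have := hq' ▸ hqR
                simpa [hR] using this
              exact le_antisymm hb ha
            have hg' : g⁻¹ ∈ T p := by rwa [hq', hpp] at hg
            have := hTinv p hpp g⁻¹ hg'
            simpa using this
        · intro g hg
          exact ⟨⟨p, hpR, hp, Or.inl hg⟩, hTsub p hg⟩
      rw [he]
      exact hTcard p hp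
    · have hpinvR : p⁻¹ ∈ R := by
        simp only [hR, mem_setOf_eq, inv_inv] at hpR ⊢
        omega
      have hpinv1 : p⁻¹ ≠ 1 := by simpa using hp
      have he : S ∩ {g : G | (g : G ⧸ H) = p} = (fun x : G => x⁻¹) '' T p⁻¹ := by
        apply Set.Subset.antisymm
        · rintro g ⟨⟨q, hqR, hq1, hg | hg⟩, hgp⟩
          · have hq : ((g : G) : G ⧸ H) = q := hTsub q hg
            have : q = p := by rw [← hq]; exact hgp
            exact absurd (this ▸ hqR) hpR
          · have hq : ((g⁻¹ : G) : G ⧸ H) = q := hTsub q hg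
            have hq' : q = p⁻¹ := by
              rw [← hq]
              have : ((g : G) : G ⧸ H) = p := hgp
              simp [this]
            exact ⟨g⁻¹, hq' ▸ hg, inv_inv g⟩
        · rintro g ⟨x, hx, rfl⟩
          have hxq : ((x : G) : G ⧸ H) = p⁻¹ := hTsub _ hx
          refine ⟨⟨p⁻¹, hpinvR, hpinv1, Or.inr (by simpa using hx)⟩, ?_⟩
          show ((x⁻¹ : G) : G ⧸ H) = p
          rw [show ((x⁻¹ : G) : G ⧸ H) = (((x : G) : G ⧸ H))⁻¹ by simp, hxq, inv_inv]
      rw [he, Set.ncard_image_of_injective _ inv_injective]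
      exact hTcard _ hpinv1
  refine ⟨S, h1S, hSinv, ⟨1, H.one_mem⟩, ?_, ?_, ?_⟩
  · intro h
    exact htop ((Subgroup.coe_eq_univ).mp h)
  · intro v hv
    have : {u | (cayley S).Adj v u ∧ u ∈ (H : Set G)} = (∅ : Set G) := by
      ext u
      simp only [mem_setOf_eq, mem_empty_iff_false, iff_false, not_and]
      rintro ⟨hne, h1, h2⟩ huH
      apply hSq _ h1
      rw [QuotientGroup.eq_one_iff]
      exact H.mul_mem huH (H.inv_mem hv)
    rw [this, Set.ncard_empty]
  · intro v hv
    have hv1 : ((v : G) : G ⧸ H) ≠ 1 := by rwa [ne_eq, QuotientGroup.eq_one_iff]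
    have him : {u | (cayley S).Adj v u ∧ u ∈ (H : Set G)} =
        (fun s : G => s * v) '' (S ∩ {g : G | (g : G ⧸ H) = ((v : G) : G ⧸ H)⁻¹}) := by
      ext u
      simp only [mem_setOf_eq, mem_image, mem_inter_iff]
      constructor
      · rintro ⟨⟨hne, h1, h2⟩, huH⟩
        refine ⟨u * v⁻¹, ⟨h1, ?_⟩, by group⟩
        show ((u * v⁻¹ : G) : G ⧸ H) = _
        rw [QuotientGroup.mk_mul, QuotientGroup.mk_inv,
          (QuotientGroup.eq_one_iff u).mpr huH, one_mul]
      · rintro ⟨s, ⟨hsS, hsq⟩, rfl⟩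
        have hsH : ((s : G) : G ⧸ H) = ((v : G) : G ⧸ H)⁻¹ := hsq
        refine ⟨⟨?_, ?_, ?_⟩, ?_⟩
        · intro h
          have hs1 : s = 1 := by
            have := h.symm
            rwa [mul_eq_right] at this
          exact h1S (hs1 ▸ hsS)
        · show s * v * v⁻¹ ∈ S
          simpa using hsS
        · show v * (s * v)⁻¹ ∈ S
          have := hSinv s hsS
          rw [mul_inv_rev, ← mul_assoc, mul_inv_cancel, one_mul]
          exact this
        · have : ((s * v : G) : G ⧸ H) = 1 := by
            rw [QuotientGroup.mk_mul, hsH, inv_mul_cancel]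
          exact (QuotientGroup.eq_one_iff _).mp this
    rw [him, Set.ncard_image_of_injective _ (mul_left_injective v)]
    exact hkey _ (by simpa using hv1)
end

section
/- Let G be a finite cyclic group and H a non-trivial proper subgroup of G. Then for any odd integer k with 1 ≤ k ≤ |H|, H is a (0,k)-regular set of G if and only if |H| is odd or |G:H| is odd. -/
open Set

/-- Auxiliary: condition on the exponent `e` describing the connection set. -/
def regCond (r m k e : ℕ) : Prop :=
  e % r ≠ 0 ∧ ((2 * (e % r) < r ∧ e / r < k) ∨ (r < 2 * (e % r) ∧ m - k ≤ e / r) ∨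
    (2 * (e % r) = r ∧ m - k ≤ 2 * (e / r) ∧ 2 * (e / r) < m + k))

instance regCond.decidable (r m k e : ℕ) : Decidable (regCond r m k e) := by
  unfold regCond; infer_instance

lemma regCond_card (r m k j : ℕ) (hj0 : 0 < j) (hjr : j < r) (hkm : k ≤ m)
    (hko : k % 2 = 1) (hpar : m % 2 = 1 ∨ r % 2 = 1) :
    ((Finset.range m).filter fun i => regCond r m k (j + i * r)).card = k := by
  classical
  have hr0 : 0 < r := lt_trans hj0 hjr
  have hmod : ∀ i : ℕ, (j + i * r) % r = j := by
    intro i; rw [Nat.add_mul_mod_self_right, Nat.mod_eq_of_lt hjr]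
  have hdiv : ∀ i : ℕ, (j + i * r) / r = i := by
    intro i; rw [Nat.add_mul_div_right _ _ hr0, Nat.div_eq_of_lt hjr, Nat.zero_add]
  rcases lt_trichotomy (2 * j) r with h | h | h
  · have heq : ((Finset.range m).filter fun i => regCond r m k (j + i * r)) =
        Finset.Ico 0 k := by
      ext i
      simp only [Finset.mem_filter, Finset.mem_range, Finset.mem_Ico, regCond, hmod, hdiv]
      omega
    rw [heq, Nat.card_Ico]; omega
  · have heq : ((Finset.range m).filter fun i => regCond r m k (j + i * r)) =
        Finset.Ico ((m - k) / 2) ((m - k) / 2 + k) := by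
      ext i
      simp only [Finset.mem_filter, Finset.mem_range, Finset.mem_Ico, regCond, hmod, hdiv]
      omega
    rw [heq, Nat.card_Ico]; omega
  · have heq : ((Finset.range m).filter fun i => regCond r m k (j + i * r)) =
        Finset.Ico (m - k) m := by
      ext i
      simp only [Finset.mem_filter, Finset.mem_range, Finset.mem_Ico, regCond, hmod, hdiv]
      omega
    rw [heq, Nat.card_Ico]; omega

lemma invol_even_card {α : Type*} [DecidableEq α] :
    ∀ s : Finset α, ∀ f : α → α, (∀ x ∈ s, f x ∈ s) → (∀ x ∈ s, f (f x) = x) →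
      (∀ x ∈ s, f x ≠ x) → Even s.card := by
  intro s
  induction s using Finset.strongInduction with
  | _ s ih =>
    intro f hmem hinv hne
    rcases s.eq_empty_or_nonempty with rfl | ⟨a, ha⟩
    · simp
    · have hfa : f a ∈ s := hmem a ha
      have hne' : f a ≠ a := hne a ha
      set t := (s.erase a).erase (f a) with ht
      have htsub : t ⊆ s := fun x hx => Finset.mem_of_mem_erase (Finset.mem_of_mem_erase hx)
      have hmt : ∀ x ∈ t, x ∈ s ∧ x ≠ a ∧ x ≠ f a := by
        intro x hx
        exact ⟨htsub hx, Finset.ne_of_mem_erase (Finset.mem_of_mem_erase hx),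
          Finset.ne_of_mem_erase hx⟩
      have hat : a ∉ t := fun h => (hmt a h).2.1 rfl
      have hssub : t ⊂ s := (Finset.ssubset_iff_of_subset htsub).2 ⟨a, ha, hat⟩
      have hft : ∀ x ∈ t, f x ∈ t := by
        intro x hx
        obtain ⟨hxs, hxa, hxfa⟩ := hmt x hx
        have h1 : f x ∈ s := hmem x hxs
        have h2 : f x ≠ f a := fun h => hxa (by rw [← hinv x hxs, h, hinv a ha])
        have h3 : f x ≠ a := fun h => hxfa (by rw [← hinv x hxs, h])
        exact Finset.mem_erase.2 ⟨h2, Finset.mem_erase.2 ⟨h3, h1⟩⟩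
      have he : Even t.card :=
        ih t hssub f hft (fun x hx => hinv x (htsub hx)) (fun x hx => hne x (htsub hx))
      have hfa' : f a ∈ s.erase a := Finset.mem_erase.2 ⟨hne', hfa⟩
      have hcard : s.card = t.card + 2 := by
        rw [ht, Finset.card_erase_of_mem hfa', Finset.card_erase_of_mem ha]
        have h2 : 1 < s.card := Finset.one_lt_card.2 ⟨a, ha, f a, hfa, Ne.symm hne'⟩
        omega
      rcases he with ⟨c, hc⟩
      exact ⟨c + 1, by omega⟩

theorem stmt14 {G : Type*} [Group G] [Fintype G] [IsCyclic G] (H : Subgroup G)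
    (hbot : H ≠ ⊥) (htop : H ≠ ⊤)
    (k : ℕ) (hk1 : 1 ≤ k) (hkH : k ≤ Nat.card H) (hko : Odd k) :
    IsRegularSetOfGroup G (H : Set G) k ↔
      (Odd (Nat.card H) ∨ Odd H.index) := by
  classical
  obtain ⟨g, hg⟩ := IsCyclic.exists_generator (α := G)
  set n := Fintype.card G with hn
  have hgo : orderOf g = n := by
    rw [hn, ← Nat.card_eq_fintype_card]; exact orderOf_eq_card_of_forall_mem_zpowers hg
  set r := H.index with hr
  set m := Nat.card H with hm
  have hmr : m * r = n := by rw [hn, ← Nat.card_eq_fintype_card]; exact H.card_mul_index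
  have hn0 : 0 < n := Fintype.card_pos
  have hr0 : 0 < r := Nat.pos_of_ne_zero H.index_ne_zero_of_finite
  have hm0 : 0 < m := Nat.card_pos
  have hcomm : ∀ a b : G, a * b = b * a := by
    intro a b
    obtain ⟨i, hi⟩ := hg a
    obtain ⟨j, hj⟩ := hg b
    rw [← hi, ← hj, ← zpow_add, ← zpow_add, add_comm]
  haveI hnormal : H.Normal := by
    refine ⟨fun x hx gg => ?_⟩
    rw [hcomm gg x, mul_assoc, mul_inv_cancel, mul_one]
    exact hx
  have hgz : ∀ x : G, ∃ e : ℕ, e < n ∧ g ^ e = x := by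
    intro x
    have h1 : IsOfFinOrder g := isOfFinOrder_of_finite g
    obtain ⟨e, he⟩ := h1.mem_powers_iff_mem_zpowers.2 (hg x)
    refine ⟨e % n, Nat.mod_lt _ hn0, ?_⟩
    rw [← hgo, pow_mod_orderOf]; exact he
  have hmem : ∀ e : ℕ, g ^ e ∈ H ↔ r ∣ e := by
    have hsurj : ∀ y : G ⧸ H, y ∈ Subgroup.zpowers ((g : G) : G ⧸ H) := by
      intro y
      obtain ⟨x, rfl⟩ := QuotientGroup.mk_surjective y
      obtain ⟨i, hi⟩ := hg x
      exact ⟨i, by rw [← hi]; rfl⟩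
    haveI : Fintype (G ⧸ H) := Fintype.ofFinite _
    have hq : orderOf ((g : G) : G ⧸ H) = r :=
      (orderOf_eq_card_of_forall_mem_zpowers hsurj).trans H.index_eq_card.symm
    intro e
    rw [← QuotientGroup.eq_one_iff, show ((g ^ e : G) : G ⧸ H) = ((g : G) : G ⧸ H) ^ e from rfl,
      ← orderOf_dvd_iff_pow_eq_one, hq]
  have hadj : ∀ (S : Set G), (1 : G) ∉ S → (∀ s ∈ S, s⁻¹ ∈ S) →
      ∀ x y : G, (cayley S).Adj x y ↔ y * x⁻¹ ∈ S := by
    intro S h1 hinv x y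
    constructor
    · exact fun h => h.2.1
    · intro h
      refine ⟨fun hxy => h1 (by subst hxy; simpa using h), h, ?_⟩
      have h2 := hinv _ h
      rwa [mul_inv_rev, inv_inv] at h2
  constructor
  · -- forward direction
    rintro ⟨S, h1S, hSinv, hreg⟩
    obtain ⟨hne, hnuniv, hind, hregk⟩ := hreg
    by_contra hcon
    push_neg at hcon
    rw [Nat.not_odd_iff_even, Nat.not_odd_iff_even] at hcon
    obtain ⟨hmE, hrE⟩ := hcon
    haveI : Fact (Nat.Prime 2) := ⟨Nat.prime_two⟩
    obtain ⟨t0, ht0⟩ := exists_prime_orderOf_dvd_card (G := H) 2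
      (by rw [Fintype.card_eq_nat_card, ← hm]; exact hmE.two_dvd)
    set t : G := (t0 : G) with htdef
    have htH : t ∈ H := t0.2
    have htord : orderOf t = 2 := by rw [htdef, Subgroup.orderOf_coe, ht0]
    haveI : Fintype (G ⧸ H) := Fintype.ofFinite _
    obtain ⟨y, hy⟩ := exists_prime_orderOf_dvd_card (G := G ⧸ H) 2
      (by rw [Fintype.card_eq_nat_card, ← Subgroup.index, ← hr]; exact hrE.two_dvd)
    obtain ⟨w, rfl⟩ := QuotientGroup.mk_surjective y
    have hw : w ∉ H := by
      intro h
      have h2 : ((w : G) : G ⧸ H) = 1 := (QuotientGroup.eq_one_iff w).2 h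
      rw [h2, orderOf_one] at hy; omega
    have hw2 : w * w ∈ H := by
      have h1 : ((w : G) : G ⧸ H) ^ 2 = 1 := by rw [← hy]; exact pow_orderOf_eq_one _
      have h2 : ((w * w : G) : G ⧸ H) = 1 := by
        rw [show ((w * w : G) : G ⧸ H) = ((w : G) : G ⧸ H) ^ 2 by rw [pow_two]; rfl]
        exact h1
      exact (QuotientGroup.eq_one_iff _).1 h2
    have hwinv : w⁻¹ ∉ (H : Set G) := fun h => hw (by simpa using H.inv_mem h)
    have hNk : {u | (cayley S).Adj w⁻¹ u ∧ u ∈ (H : Set G)}.ncard = k := hregk w⁻¹ hwinv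
    set T : Set G := {s | s ∈ S ∧ s * w ∈ H} with hT
    have hTeq : T = (· * w) '' {u | (cayley S).Adj w⁻¹ u ∧ u ∈ (H : Set G)} := by
      ext s
      simp only [hT, Set.mem_setOf_eq, Set.mem_image]
      constructor
      · rintro ⟨hsS, hswH⟩
        refine ⟨s * w⁻¹, ⟨?_, ?_⟩, by simp⟩
        · rw [hadj S h1S hSinv]
          simpa using hsS
        · have h3 : s * w⁻¹ = (s * w) * (w * w)⁻¹ := by group
          rw [SetLike.mem_coe, h3]
          exact H.mul_mem hswH (H.inv_mem hw2)
      · rintro ⟨u, ⟨hadju, huH⟩, rfl⟩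
        rw [hadj S h1S hSinv] at hadju
        constructor
        · simpa using hadju
        · have h3 : u * w * w = u * (w * w) := by group
          rw [h3]
          exact H.mul_mem huH hw2
    have hTk : T.ncard = k := by
      rw [hTeq, Set.ncard_image_of_injective _ (mul_left_injective w), hNk]
    have hTfin : T.Finite := Set.toFinite T
    have hTinv : ∀ x ∈ T, x⁻¹ ∈ T := by
      rintro x ⟨hxS, hxwH⟩
      refine ⟨hSinv x hxS, ?_⟩
      have heq : x⁻¹ * w = (x * w)⁻¹ * (w * w) := by
        rw [mul_inv_rev, hcomm w⁻¹ x⁻¹]; group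
      rw [heq]
      exact H.mul_mem (H.inv_mem hxwH) hw2
    obtain ⟨x, hxT, hxfix⟩ : ∃ x ∈ T, x⁻¹ = x := by
      by_contra hfix
      push_neg at hfix
      have hcard : hTfin.toFinset.card = k := by
        rw [← Set.ncard_eq_toFinset_card T hTfin]; exact hTk
      have heven : Even (hTfin.toFinset.card) := by
        apply invol_even_card hTfin.toFinset (fun x => x⁻¹)
        · intro x hx; rw [Set.Finite.mem_toFinset] at hx ⊢; exact hTinv x hx
        · intro x _; simp
        · intro x hx; rw [Set.Finite.mem_toFinset] at hx; exact hfix x hx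
      rw [hcard] at heven
      exact (Nat.not_even_iff_odd.2 hko) heven
    have hx1 : x ≠ 1 := fun h => h1S (h ▸ hxT.1)
    have hx2 : x ^ 2 = 1 := by rw [pow_two]; nth_rewrite 1 [← hxfix]; rw [inv_mul_cancel]
    have hxt : x = t := by
      by_contra hxt
      have ht1 : t ≠ 1 := by intro h; rw [h, orderOf_one] at htord; omega
      have ht2 : t ^ 2 = 1 := by rw [← htord]; exact pow_orderOf_eq_one t
      have hsub : ({1, x, t} : Finset G) ⊆ Finset.univ.filter (fun a : G => a ^ 2 = 1) := by
        intro a ha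
        simp only [Finset.mem_insert, Finset.mem_singleton] at ha
        rcases ha with rfl | rfl | rfl <;> simp [hx2, ht2]
      have hcard3 : ({1, x, t} : Finset G).card = 3 := by
        rw [Finset.card_insert_of_notMem (by simp [Ne.symm hx1, Ne.symm ht1]),
          Finset.card_insert_of_notMem (by simp [hxt]), Finset.card_singleton]
      have hle := IsCyclic.card_pow_eq_one_le (α := G) (n := 2) (by norm_num)
      have hcc := Finset.card_le_card hsub
      omega
    have hxH : x ∉ H := by
      intro hxH
      exact hw (by simpa using H.mul_mem (H.inv_mem hxH) hxT.2)
    exact hxH (hxt ▸ htH)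
  · -- backward direction
    intro hodd
    have hpar : m % 2 = 1 ∨ r % 2 = 1 := by
      rcases hodd with h | h
      · exact Or.inl (Nat.odd_iff.1 h)
      · exact Or.inr (Nat.odd_iff.1 h)
    have hko2 : k % 2 = 1 := Nat.odd_iff.1 hko
    set S : Set G := {x | ∃ e : ℕ, e < n ∧ regCond r m k e ∧ g ^ e = x} with hSdef
    have h1S : (1 : G) ∉ S := by
      rintro ⟨e, hen, hce, hge⟩
      have hd : n ∣ e := by rw [← hgo]; exact orderOf_dvd_of_pow_eq_one hge
      have he0 : e = 0 := Nat.eq_zero_of_dvd_of_lt hd hen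
      rw [he0] at hce
      exact hce.1 (Nat.zero_mod r)
    have hSH : ∀ x ∈ S, x ∉ (H : Set G) := by
      rintro x ⟨e, hen, hce, rfl⟩ hxH
      have hd : r ∣ e := (hmem e).1 hxH
      exact hce.1 (Nat.mod_eq_zero_of_dvd hd)
    have hSinv : ∀ s ∈ S, s⁻¹ ∈ S := by
      rintro s ⟨e, hen, hce, rfl⟩
      obtain ⟨hj0, hcond⟩ := hce
      set j := e % r with hj
      set q := e / r with hq
      have hjr : j < r := Nat.mod_lt _ hr0
      have hdm : r * q + j = e := Nat.div_add_mod e r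
      have hqm : q < m := by
        rw [hq]
        exact (Nat.div_lt_iff_lt_mul hr0).2 (by rw [hmr]; exact hen)
      set j' := r - j with hj'
      set M := m - 1 - q with hM
      have key : n - e = j' + M * r := by
        have h1 : m * r = (r * q + j) + (j' + M * r) := by
          rw [show m = q + 1 + M by omega, show r = j + j' by omega]
          ring
        rw [← hmr, ← hdm, h1, Nat.add_sub_cancel_left]
      refine ⟨n - e, by omega, ?_, ?_⟩
      · rw [key]
        have hmod : (j' + M * r) % r = j' := by
          rw [Nat.add_mul_mod_self_right, Nat.mod_eq_of_lt (by omega)]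
        have hdiv : (j' + M * r) / r = M := by
          rw [Nat.add_mul_div_right _ _ hr0, Nat.div_eq_of_lt (by omega), Nat.zero_add]
        refine ⟨by omega, ?_⟩
        rw [hmod, hdiv]
        omega
      · have h1 : g ^ (n - e) * g ^ e = 1 := by
          rw [← pow_add, Nat.sub_add_cancel (le_of_lt hen), ← hgo, pow_orderOf_eq_one]
        exact eq_inv_of_mul_eq_one_left h1
    refine ⟨S, h1S, hSinv, ⟨1, H.one_mem⟩, fun h => htop (Subgroup.coe_eq_univ.1 h), ?_, ?_⟩
    · -- independence
      intro v hv
      have hemp : {u | (cayley S).Adj v u ∧ u ∈ (H : Set G)} = ∅ := by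
        ext u
        simp only [Set.mem_setOf_eq, Set.mem_empty_iff_false, iff_false, not_and]
        intro hadju huH
        exact hSH _ hadju.2.1 (H.mul_mem huH (H.inv_mem hv))
      rw [hemp, Set.ncard_empty]
    · -- regularity
      intro v hv
      obtain ⟨c, hcn, hgc⟩ := hgz v
      have hj₀ : c % r ≠ 0 := by
        intro h
        exact hv (by rw [← hgc]; exact (hmem c).2 (Nat.dvd_of_mod_eq_zero h))
      set j₀ := c % r with hj₀def
      have hj₀r : j₀ < r := Nat.mod_lt _ hr0
      set j' := r - j₀ with hj'def
      have hj'0 : 0 < j' := by omega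
      have hj'r : j' < r := by omega
      set F := (Finset.range m).filter (fun i => regCond r m k (j' + i * r)) with hF
      have hFcard : F.card = k := regCond_card r m k j' hj'0 hj'r hkH hko2 hpar
      set φ : ℕ → G := fun i => g ^ (j' + i * r) * v with hφ
      have hexp : ∀ i, i < m → j' + i * r < n := by
        intro i hi
        calc j' + i * r < r + i * r := by omega
          _ = (i + 1) * r := by ring
          _ ≤ m * r := Nat.mul_le_mul_right r (by omega)
          _ = n := hmr
      have hdmc : r * (c / r) + j₀ = c := Nat.div_add_mod c r
      have hNeq : {u | (cayley S).Adj v u ∧ u ∈ (H : Set G)} = φ '' ↑F := by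
        ext u
        simp only [Set.mem_setOf_eq, Set.mem_image, Finset.mem_coe, hF, Finset.mem_filter,
          Finset.mem_range]
        constructor
        · rintro ⟨hadju, huH⟩
          obtain ⟨e, hen, hce, hgue⟩ := hadju.2.1
          have hue : u = g ^ e * v := by rw [hgue]; group
          have hu2 : g ^ (e + c) = u := by rw [pow_add, hgc]; exact hue.symm
          have hrec : r ∣ e + c := (hmem _).1 (by rw [hu2]; exact huH)
          have hj₁r : e % r < r := Nat.mod_lt _ hr0
          have hj₁0 : e % r ≠ 0 := hce.1
          have hdvd : r ∣ (e % r + j₀) := by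
            apply Nat.dvd_of_mod_eq_zero
            rw [hj₀def, ← Nat.add_mod]
            exact Nat.mod_eq_zero_of_dvd hrec
          have hsum : e % r + j₀ = r := by
            have hle := Nat.le_of_dvd (by omega) hdvd
            rcases Nat.eq_or_lt_of_le hle with h | h
            · omega
            · exfalso
              have h2 : r ∣ (e % r + j₀ - r) := Nat.dvd_sub hdvd dvd_rfl
              have h3 := Nat.le_of_dvd (by omega) h2
              omega
          have hdm : r * (e / r) + e % r = e := Nat.div_add_mod e r
          have he2 : e = j' + (e / r) * r := by
            rw [mul_comm (e / r) r]; omega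
          have him : e / r < m := (Nat.div_lt_iff_lt_mul hr0).2 (by rw [hmr]; exact hen)
          refine ⟨e / r, ⟨him, ?_⟩, ?_⟩
          · rw [← he2]; exact hce
          · rw [hφ]
            show g ^ (j' + e / r * r) * v = u
            rw [← he2, ← hue]
        · rintro ⟨i, ⟨him, hcond⟩, rfl⟩
          have hSmem : φ i * v⁻¹ ∈ S := by
            refine ⟨j' + i * r, hexp i him, hcond, ?_⟩
            rw [hφ]
            show g ^ (j' + i * r) = g ^ (j' + i * r) * v * v⁻¹
            rw [mul_inv_cancel_right]
          constructor
          · exact (hadj S h1S hSinv v (φ i)).2 hSmem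
          · have hdv : j' + i * r + c = r * (1 + i + c / r) := by
              have h2 : j' + j₀ = r := by omega
              calc j' + i * r + c = j' + i * r + (r * (c / r) + j₀) := by rw [hdmc]
                _ = (j' + j₀) + (i * r + r * (c / r)) := by ring
                _ = r + (i * r + r * (c / r)) := by rw [h2]
                _ = r * (1 + i + c / r) := by ring
            have hφH : g ^ (j' + i * r + c) = φ i := by rw [pow_add, hgc]
            rw [SetLike.mem_coe, ← hφH]
            exact (hmem _).2 ⟨1 + i + c / r, hdv⟩
      have hinj : Set.InjOn φ ↑F := by
        intro a ha b hb hab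
        rw [Finset.mem_coe, hF, Finset.mem_filter, Finset.mem_range] at ha hb
        have h1 : g ^ (j' + a * r) = g ^ (j' + b * r) := mul_right_cancel hab
        rw [pow_inj_mod, hgo, Nat.mod_eq_of_lt (hexp a ha.1),
          Nat.mod_eq_of_lt (hexp b hb.1)] at h1
        have h2 : a * r = b * r := by omega
        exact Nat.eq_of_mul_eq_mul_right hr0 h2
      rw [hNeq, Set.ncard_image_of_injOn hinj, Set.ncard_coe_finset, hFcard]
end

section
/- Let D₂ₙ = ⟨a, b | aⁿ = b² = e, bab = a⁻¹⟩ be the dihedral group of order 2n ≥ 6, and let H = ⟨a^t, a^s b⟩ with t dividing n and 0 ≤ s ≤ n−1 be a proper subgroup of D₂ₙ. Then for every integer k with 1 ≤ k ≤ |H|, H is a (0,k)-regular set of D₂ₙ. -/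
open Set

namespace Stmt15Aux

open DihedralGroup

variable {n : ℕ} [NeZero n]

/-- The set of reflections. -/
def RefS (n : ℕ) : Set (DihedralGroup n) := {x | ∃ i, x = sr i}

lemma refS_inv {x : DihedralGroup n} (h : x ∈ RefS n) : x⁻¹ = x := by
  obtain ⟨i, rfl⟩ := h; rfl

lemma refS_sq {x : DihedralGroup n} (h : x ∈ RefS n) : x * x = 1 := by
  obtain ⟨i, rfl⟩ := h; rw [sr_mul_sr, sub_self, r_zero]

lemma not_refS_inv {x : DihedralGroup n} (h : x ∉ RefS n) : x⁻¹ ∉ RefS n := by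
  rcases x with i | i
  · rintro ⟨j, hj⟩
    have : (r i)⁻¹ = r (-i) := rfl
    rw [this] at hj
    exact absurd hj (by simp)
  · exact absurd ⟨i, rfl⟩ h

lemma mul_refS_iff (x y : DihedralGroup n) :
    x * y ∈ RefS n ↔ ¬(x ∈ RefS n ↔ y ∈ RefS n) := by
  rcases x with i | i <;> rcases y with j | j <;>
    simp [RefS]

variable (H : Subgroup (DihedralGroup n))

/-- The reflection part of the right coset `H g`. -/
def cosR (g : DihedralGroup n) : Set (DihedralGroup n) :=
  {y | y * g⁻¹ ∈ H ∧ y ∈ RefS n}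

/-- The rotation part of the right coset `H g`. -/
def cosA (g : DihedralGroup n) : Set (DihedralGroup n) :=
  {y | y * g⁻¹ ∈ H ∧ y ∉ RefS n}

lemma coset_trans {x g y : DihedralGroup n} (h : x * g⁻¹ ∈ H) :
    y * x⁻¹ ∈ H ↔ y * g⁻¹ ∈ H := by
  constructor
  · intro h1
    have := mul_mem h1 h
    simpa [mul_assoc] using this
  · intro h1
    have := mul_mem h1 (inv_mem h)
    simpa [mul_assoc] using this

lemma cosR_congr {x g : DihedralGroup n} (h : x * g⁻¹ ∈ H) :
    cosR H x = cosR H g := by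
  ext y; exact and_congr_left' (coset_trans H h)

-- cardinality of `H ∩ reflections`
variable {β : DihedralGroup n}

lemma card_H_rot (hβH : β ∈ H) (hβR : β ∈ RefS n) :
    ((H : Set (DihedralGroup n)) ∩ (RefS n)ᶜ).ncard
      = ((H : Set (DihedralGroup n)) ∩ RefS n).ncard := by
  have himg : (H : Set (DihedralGroup n)) ∩ (RefS n)ᶜ
      = (β * ·) '' ((H : Set (DihedralGroup n)) ∩ RefS n) := by
    ext x
    constructor
    · rintro ⟨hx, hxr⟩
      refine ⟨β * x, ⟨mul_mem hβH hx, ?_⟩, ?_⟩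
      · rw [mul_refS_iff]
        exact fun hiff => hxr (hiff.mp hβR)
      · show β * (β * x) = x
        rw [← mul_assoc, refS_sq hβR, one_mul]
    · rintro ⟨y, ⟨hy, hyr⟩, rfl⟩
      refine ⟨mul_mem hβH hy, ?_⟩
      rw [Set.mem_compl_iff, mul_refS_iff]
      simp [hβR, hyr]
  rw [himg, Set.ncard_image_of_injective _ (mul_right_injective β)]

lemma cosR_eq_image (g : DihedralGroup n) :
    cosR H g = (· * g) '' {h | h ∈ H ∧ h * g ∈ RefS n} := by
  ext y
  constructor
  · rintro ⟨h1, h2⟩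
    exact ⟨y * g⁻¹, ⟨h1, by simpa using h2⟩, by simp⟩
  · rintro ⟨h, ⟨hh1, hh2⟩, rfl⟩
    exact ⟨by simpa using hh1, hh2⟩

lemma cosA_eq_image (g : DihedralGroup n) :
    cosA H g = (· * g) '' {h | h ∈ H ∧ h * g ∉ RefS n} := by
  ext y
  constructor
  · rintro ⟨h1, h2⟩
    exact ⟨y * g⁻¹, ⟨h1, by simpa using h2⟩, by simp⟩
  · rintro ⟨h, ⟨hh1, hh2⟩, rfl⟩
    exact ⟨by simpa using hh1, hh2⟩

lemma card_cosR (hβH : β ∈ H) (hβR : β ∈ RefS n) (g : DihedralGroup n) :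
    (cosR H g).ncard = ((H : Set (DihedralGroup n)) ∩ RefS n).ncard := by
  rw [cosR_eq_image, Set.ncard_image_of_injective _ (mul_left_injective g)]
  by_cases hg : g ∈ RefS n
  · have : {h | h ∈ H ∧ h * g ∈ RefS n}
        = (H : Set (DihedralGroup n)) ∩ (RefS n)ᶜ := by
      ext h; simp only [Set.mem_setOf_eq, Set.mem_inter_iff, Set.mem_compl_iff,
        SetLike.mem_coe, mul_refS_iff]
      tauto
    rw [this, card_H_rot H hβH hβR]
  · have : {h | h ∈ H ∧ h * g ∈ RefS n}
        = (H : Set (DihedralGroup n)) ∩ RefS n := by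
      ext h; simp only [Set.mem_setOf_eq, Set.mem_inter_iff,
        SetLike.mem_coe, mul_refS_iff]
      tauto
    rw [this]

lemma card_cosA (hβH : β ∈ H) (hβR : β ∈ RefS n) (g : DihedralGroup n) :
    (cosA H g).ncard = ((H : Set (DihedralGroup n)) ∩ RefS n).ncard := by
  rw [cosA_eq_image, Set.ncard_image_of_injective _ (mul_left_injective g)]
  by_cases hg : g ∈ RefS n
  · have : {h | h ∈ H ∧ h * g ∉ RefS n}
        = (H : Set (DihedralGroup n)) ∩ RefS n := by
      ext h; simp only [Set.mem_setOf_eq, Set.mem_inter_iff,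
        SetLike.mem_coe, mul_refS_iff]
      tauto
    rw [this]
  · have : {h | h ∈ H ∧ h * g ∉ RefS n}
        = (H : Set (DihedralGroup n)) ∩ (RefS n)ᶜ := by
      ext h; simp only [Set.mem_setOf_eq, Set.mem_inter_iff, Set.mem_compl_iff,
        SetLike.mem_coe, mul_refS_iff]
      tauto
    rw [this, card_H_rot H hβH hβR]

lemma card_H_split (hβH : β ∈ H) (hβR : β ∈ RefS n) :
    Nat.card H = ((H : Set (DihedralGroup n)) ∩ RefS n).ncard
      + ((H : Set (DihedralGroup n)) ∩ RefS n).ncard := by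
  have : (H : Set (DihedralGroup n))
      = ((H : Set (DihedralGroup n)) ∩ RefS n)
        ∪ ((H : Set (DihedralGroup n)) ∩ (RefS n)ᶜ) := by
    rw [← Set.inter_union_distrib_left, Set.union_compl_self, Set.inter_univ]
  have h0 : Nat.card H = ((H : Set (DihedralGroup n))).ncard := by
    rw [← Nat.card_coe_set_eq]
    rfl
  have hdisj : Disjoint ((H : Set (DihedralGroup n)) ∩ RefS n)
      ((H : Set (DihedralGroup n)) ∩ (RefS n)ᶜ) := by
    rw [Set.disjoint_left]
    rintro a ⟨_, h1⟩ ⟨_, h2⟩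
    exact h2 h1
  calc Nat.card H
      = (((H : Set (DihedralGroup n)) ∩ RefS n)
          ∪ ((H : Set (DihedralGroup n)) ∩ (RefS n)ᶜ)).ncard := by rw [h0, ← this]
    _ = ((H : Set (DihedralGroup n)) ∩ RefS n).ncard
          + ((H : Set (DihedralGroup n)) ∩ (RefS n)ᶜ).ncard :=
        Set.ncard_union_eq hdisj (Set.toFinite _) (Set.toFinite _)
    _ = _ := by rw [card_H_rot H hβH hβR]

/-- Choice of a subset of prescribed size. -/
noncomputable def sel (j : ℕ) (X : Set (DihedralGroup n)) : Set (DihedralGroup n) :=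
  if h : j ≤ X.ncard then (Set.exists_subset_card_eq h).choose else ∅

lemma sel_subset (j : ℕ) (X : Set (DihedralGroup n)) : sel j X ⊆ X := by
  unfold sel
  split_ifs with h
  · exact (Set.exists_subset_card_eq h).choose_spec.1
  · exact Set.empty_subset _

lemma sel_card {j : ℕ} {X : Set (DihedralGroup n)} (h : j ≤ X.ncard) :
    (sel j X).ncard = j := by
  unfold sel
  rw [dif_pos h]
  exact (Set.exists_subset_card_eq h).choose_spec.2

lemma main (hβH : β ∈ H) (hβR : β ∈ RefS n)
    (hprop : H ≠ ⊤) (k : ℕ) (hk1 : 1 ≤ k) (hk2 : k ≤ Nat.card H) :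
    IsRegularSetOfGroup (DihedralGroup n) (H : Set (DihedralGroup n)) k := by
  set q := ((H : Set (DihedralGroup n)) ∩ RefS n).ncard with hq
  have hqq : Nat.card H = q + q := card_H_split H hβH hβR
  have hk2q : k ≤ q + q := hqq ▸ hk2
  set jj := if k ≤ q then k else k - q with hjj
  have hjq : jj ≤ q := by rw [hjj]; split_ifs <;> omega
  set Φ : Set (DihedralGroup n) :=
    {x | x ∉ H ∧ x ∈ sel jj (cosR H x)} with hΦ
  set R : Set (DihedralGroup n) :=
    {x | q < k ∧ x ∉ H ∧ x ∉ RefS n} with hR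
  set S : Set (DihedralGroup n) := R ∪ Φ with hS
  have hSnH : ∀ x ∈ S, x ∉ H := by
    rintro x (hx | hx)
    exacts [hx.2.1, hx.1]
  have hΦmem : ∀ x ∈ Φ, x ∈ RefS n := fun x hx => (sel_subset jj (cosR H x) hx.2).2
  have hSinv : ∀ x ∈ S, x⁻¹ ∈ S := by
    rintro x (hx | hx)
    · refine Or.inl ⟨hx.1, fun h => hx.2.1 (by simpa using inv_mem h), not_refS_inv hx.2.2⟩
    · rw [refS_inv (hΦmem x hx)]
      exact Or.inr hx
  have key : ∀ g : DihedralGroup n, g ∉ H →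
      (S ∩ {y | y * g⁻¹ ∈ H}).ncard = k := by
    intro g hg
    have hsplit : S ∩ {y | y * g⁻¹ ∈ H}
        = (R ∩ {y | y * g⁻¹ ∈ H}) ∪ (Φ ∩ {y | y * g⁻¹ ∈ H}) := by
      rw [hS, Set.union_inter_distrib_right]
    have hnotH : ∀ x : DihedralGroup n, x * g⁻¹ ∈ H → x ∉ H := by
      intro x hxc hxmem
      have hginv : g⁻¹ ∈ H := by
        have := mul_mem (inv_mem hxmem) hxc
        simpa using this
      exact hg (by simpa using inv_mem hginv)
    have hΦeq : Φ ∩ {y | y * g⁻¹ ∈ H} = sel jj (cosR H g) := by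
      ext x
      constructor
      · rintro ⟨⟨hxH, hxsel⟩, hxc⟩
        rwa [cosR_congr H hxc] at hxsel
      · intro hxsel
        have hxcos : x ∈ cosR H g := sel_subset _ _ hxsel
        have hxc : x * g⁻¹ ∈ H := hxcos.1
        exact ⟨⟨hnotH x hxc, by rwa [cosR_congr H hxc]⟩, hxc⟩
    have hΦcard : (Φ ∩ {y | y * g⁻¹ ∈ H}).ncard = jj := by
      rw [hΦeq, sel_card]
      rw [card_cosR H hβH hβR g, ← hq]
      exact hjq
    have hdisj : Disjoint (R ∩ {y | y * g⁻¹ ∈ H}) (Φ ∩ {y | y * g⁻¹ ∈ H}) := by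
      rw [Set.disjoint_left]
      rintro a ⟨⟨_, _, har⟩, _⟩ ⟨haΦ, _⟩
      exact har (hΦmem a haΦ)
    by_cases hkq : k ≤ q
    · have hRempty : R ∩ {y | y * g⁻¹ ∈ H} = ∅ := by
        ext x
        simp only [Set.mem_inter_iff, Set.mem_empty_iff_false, iff_false]
        rintro ⟨⟨h1, -, -⟩, -⟩
        omega
      rw [hsplit, hRempty, Set.empty_union, hΦcard, hjj, if_pos hkq]
    · have hReq : R ∩ {y | y * g⁻¹ ∈ H} = cosA H g := by
        ext x
        constructor
        · rintro ⟨⟨-, -, hxr⟩, hxc⟩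
          exact ⟨hxc, hxr⟩
        · rintro ⟨hxc, hxr⟩
          exact ⟨⟨by omega, hnotH x hxc, hxr⟩, hxc⟩
      rw [hsplit, Set.ncard_union_eq hdisj (Set.toFinite _) (Set.toFinite _), hReq,
        card_cosA H hβH hβR g, ← hq, hΦcard, hjj, if_neg hkq]
      omega
  refine ⟨S, fun h => hSnH 1 h H.one_mem, hSinv, ⟨1, H.one_mem⟩, ?_, ?_, ?_⟩
  · intro h
    exact hprop (Subgroup.coe_eq_univ.1 h)
  · intro v hv
    have : {u | (cayley S).Adj v u ∧ u ∈ (H : Set (DihedralGroup n))} = ∅ := by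
      ext u
      simp only [Set.mem_setOf_eq, Set.mem_empty_iff_false, iff_false]
      rintro ⟨⟨hne, h1, h2⟩, huH⟩
      exact hSnH _ h1 (mul_mem huH (inv_mem hv))
    rw [this, Set.ncard_empty]
  · intro v hv
    have hvH : v ∉ H := hv
    have himg : {u | (cayley S).Adj v u ∧ u ∈ (H : Set (DihedralGroup n))}
        = (· * v) '' (S ∩ {y | y * (v⁻¹)⁻¹ ∈ H}) := by
      ext u
      constructor
      · rintro ⟨⟨hne, h1, h2⟩, huH⟩
        exact ⟨u * v⁻¹, ⟨h1, by simpa using huH⟩, by simp⟩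
      · rintro ⟨y, ⟨hyS, hyH⟩, rfl⟩
        have hyvH : y * v ∈ H := by simpa using hyH
        refine ⟨⟨?_, ?_, ?_⟩, hyvH⟩
        · intro e
          apply hvH
          rw [e]
          exact hyvH
        · simpa using hyS
        · have hrw : v * (y * v)⁻¹ = y⁻¹ := by group
          rw [hrw]
          exact hSinv y hyS
    rw [himg, Set.ncard_image_of_injective _ (mul_left_injective v)]
    exact key v⁻¹ (fun h => hvH (by simpa using inv_mem h))

end Stmt15Aux

theorem stmt15 (n : ℕ) (hn : 3 ≤ n) (t s : ℕ) (ht : t ∣ n) (hs : s ≤ n - 1)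
    (H : Subgroup (DihedralGroup n))
    (hH : H = Subgroup.closure
      {DihedralGroup.r (t : ZMod n),
       DihedralGroup.r (s : ZMod n) * DihedralGroup.sr 0})
    (hprop : H ≠ ⊤) (k : ℕ) (hk1 : 1 ≤ k) (hk2 : k ≤ Nat.card H) :
    IsRegularSetOfGroup (DihedralGroup n) (H : Set (DihedralGroup n)) k := by
  haveI : NeZero n := ⟨by omega⟩
  have hβH : DihedralGroup.r (s : ZMod n) * DihedralGroup.sr 0 ∈ H := by
    rw [hH]
    exact Subgroup.subset_closure (by simp)
  have hβR : DihedralGroup.r (s : ZMod n) * DihedralGroup.sr 0 ∈ Stmt15Aux.RefS n :=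
    ⟨(0 : ZMod n) - (s : ZMod n), by rw [DihedralGroup.r_mul_sr]⟩
  exact Stmt15Aux.main H hβH hβR hprop k hk1 hk2
end
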